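/- arXiv:1712.00478 — 10 statements merged into one kernel-verified Lean document; each statement's English description precedes it below -/
import Mathlib

section
/- Let K be an infinite compact Hausdorff space. Then the closed unit ball of C(K × {0,1}) (where {0,1} carries the discrete topology) contains a 2-equilateral set of cardinality w(K). -/
universe u

open Cardinal

/-- The weight of a topological space: the minimal infinite cardinality of a
base for its topology. -/
noncomputable def weight (X : Type u) [TopologicalSpace X] : Cardinal.{u} :=
  ⨅ B : {B : Set (Set X) // TopologicalSpace.IsTopologicalBasis B}, max #B.1 ℵ₀

namespace EquilateralAux

open Set TopologicalSpace

/-! ### Real-valued threshold functions -/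

/-- Threshold function: `-1` for `t ≤ 1/3`, `1` for `t ≥ 2/3`. -/
noncomputable def thA (t : ℝ) : ℝ := max (-1) (min 1 (6*t - 3))

/-- Bump function: `1` on `[1/3, 2/3]`, `-1` at `0` and at `1`. -/
noncomputable def thB (t : ℝ) : ℝ := max (-1) (min 1 (min (6*t - 1) (5 - 6*t)))

lemma thA_cont : Continuous thA := by unfold thA; fun_prop

lemma thB_cont : Continuous thB := by unfold thB; fun_prop

lemma thA_mem (t : ℝ) : |thA t| ≤ 1 := by
  rw [abs_le]
  exact ⟨le_max_left _ _, max_le (by norm_num) (min_le_left _ _)⟩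

lemma thB_mem (t : ℝ) : |thB t| ≤ 1 := by
  rw [abs_le]
  exact ⟨le_max_left _ _, max_le (by norm_num) (min_le_left _ _)⟩

lemma thA_one : thA 1 = 1 := by unfold thA; norm_num

lemma thA_zero : thA 0 = -1 := by unfold thA; norm_num

lemma thB_one : thB 1 = -1 := by unfold thB; norm_num

lemma thA_low {c : ℝ} (h : c ≤ 1/3) : thA c = -1 := by
  unfold thA
  have h1 : 6*c - 3 ≤ -1 := by linarith
  rw [min_eq_right (by linarith), max_eq_left h1]

lemma thA_high {c : ℝ} (h : 2/3 ≤ c) : thA c = 1 := by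
  unfold thA
  have h1 : (1:ℝ) ≤ 6*c - 3 := by linarith
  rw [min_eq_left h1, max_eq_right (by norm_num)]

lemma thB_mid {c : ℝ} (h1 : 1/3 < c) (h2 : c < 2/3) : thB c = 1 := by
  unfold thB
  have ha : (1:ℝ) ≤ 6*c - 1 := by linarith
  have hb : (1:ℝ) ≤ 5 - 6*c := by linarith
  rw [min_eq_left (le_min ha hb), max_eq_right (by norm_num)]

lemma th_trichotomy (c : ℝ) : thA c = -1 ∨ thA c = 1 ∨ thB c = 1 := by
  rcases le_or_gt c (1/3) with h | h
  · exact Or.inl (thA_low h)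
  · rcases le_or_gt (2/3) c with h' | h'
    · exact Or.inr (Or.inl (thA_high h'))
    · exact Or.inr (Or.inr (thB_mid h h'))

/-! ### Weight estimates -/

lemma aleph0_le_weight (X : Type u) [TopologicalSpace X] : ℵ₀ ≤ weight X := by
  haveI : Nonempty {B : Set (Set X) // IsTopologicalBasis B} :=
    ⟨⟨_, isTopologicalBasis_opens⟩⟩
  exact le_ciInf fun B => le_max_right _ _

lemma weight_le_basis {X : Type u} [TopologicalSpace X] {B : Set (Set X)}
    (hB : IsTopologicalBasis B) : weight X ≤ max #B ℵ₀ :=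
  ciInf_le' _ (⟨B, hB⟩ : {B : Set (Set X) // IsTopologicalBasis B})

/-- If a family of continuous functions separates the points of a compact Hausdorff
space, then the weight of the space is at most the (infinite) cardinality of the family. -/
lemma weight_le_of_separating {K : Type u} [TopologicalSpace K] [CompactSpace K] [T2Space K]
    (ι : Type u) (f : ι → C(K, ℝ))
    (hsep : ∀ x y : K, x ≠ y → ∃ i, f i x ≠ f i y) :
    weight K ≤ max #ι ℵ₀ := by
  classical
  set Φ : List (ι × ℚ × ℚ) → Set K :=
    fun l => ⋂ t ∈ l, (f t.1) ⁻¹' Ioo (t.2.1 : ℝ) (t.2.2 : ℝ) with hΦ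
  have hB : IsTopologicalBasis (range Φ) := by
    apply isTopologicalBasis_of_isOpen_of_nhds
    · rintro u ⟨l, rfl⟩
      exact l.finite_toSet.isOpen_biInter fun t _ =>
        (isOpen_Ioo).preimage (f t.1).continuous
    · intro x u hxu hu
      have hC : IsCompact uᶜ := hu.isClosed_compl.isCompact
      have key : ∀ y : ↥uᶜ, ∃ t : ι × ℚ × ℚ,
          f t.1 x ∈ Ioo (t.2.1 : ℝ) (t.2.2 : ℝ) ∧ f t.1 y.1 ∉ Icc (t.2.1 : ℝ) (t.2.2 : ℝ) := by
        rintro ⟨y, hy⟩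
        have hxy : x ≠ y := fun h => hy (h ▸ hxu)
        obtain ⟨i, hi⟩ := hsep x y hxy
        rcases lt_or_gt_of_ne hi with h | h
        · obtain ⟨r, hr1, hr2⟩ := exists_rat_btwn h
          obtain ⟨q, hq⟩ := exists_rat_lt (f i x)
          exact ⟨⟨i, q, r⟩, ⟨hq, hr1⟩, fun hmem => absurd hmem.2 (not_le.mpr hr2)⟩
        · obtain ⟨r, hr1, hr2⟩ := exists_rat_btwn h
          obtain ⟨q, hq⟩ := exists_rat_gt (f i x)
          exact ⟨⟨i, r, q⟩, ⟨hr2, hq⟩, fun hmem => absurd hmem.1 (not_le.mpr hr1)⟩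
      choose T hT1 hT2 using key
      have hcov : uᶜ ⊆ ⋃ y : ↥uᶜ, (f (T y).1) ⁻¹' (Icc ((T y).2.1 : ℝ) ((T y).2.2 : ℝ))ᶜ := by
        intro y hy
        exact mem_iUnion.mpr ⟨⟨y, hy⟩, hT2 ⟨y, hy⟩⟩
      obtain ⟨b, hbcov⟩ := hC.elim_finite_subcover _
        (fun y => (isClosed_Icc.preimage (f (T y).1).continuous).isOpen_compl) hcov
      refine ⟨Φ (b.toList.map T), ⟨_, rfl⟩, ?_, ?_⟩
      · simp only [hΦ, mem_iInter₂]
        rintro t ht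
        simp only [List.mem_map, Finset.mem_toList] at ht
        obtain ⟨y, hy, rfl⟩ := ht
        exact hT1 y
      · intro z hz
        by_contra hzu
        have hzC : z ∈ uᶜ := hzu
        obtain ⟨y, hy, hzy⟩ := mem_iUnion₂.mp (hbcov hzC)
        have : z ∈ (f (T y).1) ⁻¹' Ioo ((T y).2.1 : ℝ) ((T y).2.2 : ℝ) := by
          simp only [hΦ, mem_iInter₂] at hz
          exact hz (T y) (by
            simp only [List.mem_map, Finset.mem_toList]
            exact ⟨y, hy, rfl⟩)
        exact hzy (Ioo_subset_Icc_self this)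
  calc weight K ≤ max #(range Φ) ℵ₀ := weight_le_basis hB
    _ ≤ max (max ℵ₀ #(List (ι × ℚ × ℚ))) ℵ₀ := by
        apply max_le_max_right
        exact le_max_of_le_right mk_range_le
    _ ≤ max #ι ℵ₀ := by
        have h1 : #(List (ι × ℚ × ℚ)) ≤ max ℵ₀ #(ι × ℚ × ℚ) := mk_list_le_max _
        have h2 : #(ι × ℚ × ℚ) ≤ max #ι ℵ₀ := by
          have he : #(ι × ℚ × ℚ) = #ι * ℵ₀ := by
            simp [mk_prod, mul_assoc, aleph0_mul_aleph0]
          rw [he]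
          calc #ι * ℵ₀ ≤ max #ι ℵ₀ * max #ι ℵ₀ :=
                mul_le_mul' (le_max_left _ _) (le_max_right _ _)
            _ = max #ι ℵ₀ := mul_eq_self (le_max_right _ _)
        have h3 : #(List (ι × ℚ × ℚ)) ≤ max #ι ℵ₀ :=
          h1.trans (max_le (le_max_right _ _) h2)
        exact max_le (max_le (le_max_right _ _) h3) (le_max_right _ _)

/-! ### The wrap-up lemma -/

/-- Any family of functions in the unit ball of `C(K × Bool)` that pairwise attain
the values `1` and `-1` at a common point gives a 2-equilateral subset of the ball. -/
theorem equilateral_of_family {K : Type u} [TopologicalSpace K] [CompactSpace K]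
    (T' : Type u) (g : T' → C(K × Bool, ℝ))
    (hb : ∀ a p, |g a p| ≤ 1)
    (hw : ∀ a b : T', a ≠ b → ∃ p, g a p = 1 ∧ g b p = -1 ∨ g a p = -1 ∧ g b p = 1)
    (hcard : #T' = weight K) :
    ∃ A : Set C(K × Bool, ℝ), A ⊆ Metric.closedBall 0 1 ∧ #A = weight K ∧
      ∀ f ∈ A, ∀ g ∈ A, f ≠ g → ‖f - g‖ = 2 := by
  have hnorm : ∀ a, ‖g a‖ ≤ 1 := fun a =>
    (ContinuousMap.norm_le _ zero_le_one).mpr fun p => by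
      rw [Real.norm_eq_abs]; exact hb a p
  have hinj : Function.Injective g := by
    intro a b hab
    by_contra hne
    obtain ⟨p, h | h⟩ := hw a b hne
    · rw [hab, h.2] at h; norm_num at h
    · rw [hab, h.2] at h; norm_num at h
  refine ⟨range g, ?_, ?_, ?_⟩
  · rintro f ⟨a, rfl⟩
    rw [Metric.mem_closedBall, dist_zero_right]
    exact hnorm a
  · rw [mk_range_eq g hinj, hcard]
  · rintro f ⟨a, rfl⟩ f' ⟨b, rfl⟩ hne
    have hab : a ≠ b := fun h => hne (by rw [h])
    obtain ⟨p, hp⟩ := hw a b hab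
    apply le_antisymm
    · calc ‖g a - g b‖ ≤ ‖g a‖ + ‖g b‖ := norm_sub_le _ _
        _ ≤ 2 := by linarith [hnorm a, hnorm b]
    · have h2 : |(g a - g b) p| ≤ ‖g a - g b‖ := by
        rw [← Real.norm_eq_abs]; exact ContinuousMap.norm_coe_le_norm _ p
      have h3 : (g a - g b) p = g a p - g b p := ContinuousMap.sub_apply _ _ _
      rcases hp with ⟨h4, h5⟩ | ⟨h4, h5⟩ <;>
        · rw [h3, h4, h5] at h2; norm_num at h2; linarith

/-! ### The countable construction -/

lemma step_disj {K : Type u} [TopologicalSpace K] [T2Space K] (V : Set K)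
    (hV : IsOpen V) (hVi : V.Infinite) :
    ∃ U W : Set K, IsOpen U ∧ IsOpen W ∧ U.Nonempty ∧ W.Infinite ∧
      W ⊆ V ∧ U ⊆ V ∧ Disjoint U W := by
  by_cases hiso : ∃ x ∈ V, IsOpen ({x} : Set K)
  · obtain ⟨x, hxV, hx⟩ := hiso
    refine ⟨{x}, V \ {x}, hx, hV.sdiff isClosed_singleton, ⟨x, rfl⟩,
      hVi.diff (finite_singleton x), diff_subset, singleton_subset_iff.mpr hxV,
      disjoint_sdiff_right⟩
  · obtain ⟨x, hxV, y, hyV, hxy⟩ := hVi.nontrivial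
    obtain ⟨A, B, hA, hB, hxA, hyB, hAB⟩ := t2_separation hxy
    refine ⟨V ∩ A, V ∩ B, hV.inter hA, hV.inter hB, ⟨x, hxV, hxA⟩, ?_,
      inter_subset_left, inter_subset_left, hAB.mono inter_subset_right inter_subset_right⟩
    by_contra hfin
    rw [Set.not_infinite] at hfin
    obtain ⟨z, hz⟩ : (V ∩ B).Nonempty := ⟨y, hyV, hyB⟩
    apply hiso
    refine ⟨z, hz.1, ?_⟩
    have h1 : IsOpen (V ∩ B) := hV.inter hB
    have h2 : IsClosed ((V ∩ B) \ {z}) := (show ((V ∩ B) \ {z}).Finite from hfin.diff).isClosed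
    have h3 : ({z} : Set K) = (V ∩ B) ∩ ((V ∩ B) \ {z})ᶜ := by
      ext w
      simp only [mem_singleton_iff, mem_inter_iff, mem_compl_iff, mem_diff, not_and, not_not]
      constructor
      · rintro rfl; exact ⟨hz, fun _ => rfl⟩
      · rintro ⟨hw, h⟩; exact h hw
    rw [h3]
    exact h1.inter h2.isOpen_compl

lemma exists_disjoint_opens (K : Type u) [TopologicalSpace K] [T2Space K] [Infinite K] :
    ∃ (x : ℕ → K) (U : ℕ → Set K), (∀ n, IsOpen (U n)) ∧ (∀ n, x n ∈ U n) ∧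
      ∀ m n : ℕ, m ≠ n → Disjoint (U m) (U n) := by
  classical
  have hstep : ∀ V : {V : Set K // IsOpen V ∧ V.Infinite}, ∃ p : Set K × Set K,
      IsOpen p.1 ∧ p.1.Nonempty ∧ IsOpen p.2 ∧ p.2.Infinite ∧ p.2 ⊆ V.1 ∧ p.1 ⊆ V.1 ∧
        Disjoint p.1 p.2 := by
    intro V
    obtain ⟨U, W, h1, h2, h3, h4, h5, h6, h7⟩ := step_disj V.1 V.2.1 V.2.2
    exact ⟨(U, W), h1, h3, h2, h4, h5, h6, h7⟩
  choose nxt hn1 hn2 hn3 hn4 hn5 hn6 hn7 using hstep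
  let Vc : ℕ → {V : Set K // IsOpen V ∧ V.Infinite} := fun n =>
    Nat.recAux ⟨univ, isOpen_univ, infinite_univ⟩
      (fun _ p => ⟨(nxt p).2, hn3 p, hn4 p⟩) n
  let U : ℕ → Set K := fun n => (nxt (Vc n)).1
  have hVsucc : ∀ n, (Vc (n + 1)).1 ⊆ (Vc n).1 := fun n => hn5 (Vc n)
  have hUV : ∀ n, U n ⊆ (Vc n).1 := fun n => hn6 (Vc n)
  have hdisj : ∀ n, Disjoint (U n) (Vc (n + 1)).1 := fun n =>
    (hn7 (Vc n)).mono_right (le_refl _)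
  have hmono : ∀ m n : ℕ, n ≤ m → (Vc m).1 ⊆ (Vc n).1 := by
    intro m n h
    induction m with
    | zero => rw [Nat.le_zero.mp h]
    | succ k ih =>
      rcases Nat.lt_or_ge n (k+1) with h' | h'
      · exact (hVsucc k).trans (ih (Nat.lt_succ_iff.mp h'))
      · rw [Nat.le_antisymm h h']
  have key : ∀ m n : ℕ, n < m → Disjoint (U n) (U m) := by
    intro m n h
    exact (hdisj n).mono_right ((hUV m).trans (hmono m (n+1) h))
  have hUne : ∀ n, (U n).Nonempty := fun n => hn2 (Vc n)
  choose x hx using hUne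
  refine ⟨x, U, fun n => hn1 (Vc n), hx, ?_⟩
  intro m n hmn
  rcases lt_or_gt_of_ne hmn with h | h
  · exact key n m h
  · exact (key m n h).symm

/-! ### The transfinite construction (uncountable weight) -/

section Uncountable

variable {K : Type u} [TopologicalSpace K] [CompactSpace K] [T2Space K]

open scoped Classical in
/-- One step of the transfinite construction: pick a continuous function taking the
values `1` and `0` on a pair of points not separated by the previously chosen
functions. -/
noncomputable def famStep (a : (weight K).ord.ToType)
    (prev : ∀ b, b < a → C(K, ℝ)) : C(K, ℝ) :=
  if h : ∃ p : C(K, ℝ) × K × K, p.2.1 ≠ p.2.2 ∧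
      (∀ b (hb : b < a), prev b hb p.2.1 = prev b hb p.2.2) ∧
      p.1 p.2.1 = 1 ∧ p.1 p.2.2 = 0 ∧ ∀ z, p.1 z ∈ Icc (0:ℝ) 1
  then h.choose.1 else 0

/-- The transfinite family of functions. -/
noncomputable def fam : (weight K).ord.ToType → C(K, ℝ) :=
  WellFounded.fix IsWellFounded.wf famStep

set_option linter.unusedSectionVars false in
lemma fam_eq (a : (weight K).ord.ToType) :
    fam (K := K) a = famStep a (fun b _ => fam b) :=
  WellFounded.fix_eq _ _ _

lemma fam_cond (hK : ℵ₀ < weight K) (a : (weight K).ord.ToType) :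
    ∃ p : C(K, ℝ) × K × K, p.2.1 ≠ p.2.2 ∧
      (∀ b (_ : b < a), fam (K := K) b p.2.1 = fam (K := K) b p.2.2) ∧
      p.1 p.2.1 = 1 ∧ p.1 p.2.2 = 0 ∧ ∀ z, p.1 z ∈ Icc (0:ℝ) 1 := by
  by_contra hcon
  have hsep : ∀ x y : K, x ≠ y → ∃ b : ↥(Iio a), fam (K := K) b.1 x ≠ fam (K := K) b.1 y := by
    intro x y hxy
    by_contra hsep'
    push_neg at hsep'
    obtain ⟨f, hf0, hf1, hficc⟩ := exists_continuous_zero_one_of_isClosed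
      (isClosed_singleton (x := y)) (isClosed_singleton (x := x))
      (by rw [Set.disjoint_singleton_left]; simp [hxy.symm])
    exact hcon ⟨(f, x, y), hxy, (fun b hb => hsep' ⟨b, hb⟩),
      by simpa using hf1 rfl, by simpa using hf0 rfl, hficc⟩
  have hle := weight_le_of_separating ↥(Iio a) (fun b => fam (K := K) b.1) hsep
  have hlt : #↥(Iio a) < weight K := Cardinal.mk_Iio_ord_toType a
  exact absurd hle (not_le.mpr (max_lt hlt hK))

lemma fam_spec (hK : ℵ₀ < weight K) (a : (weight K).ord.ToType) :
    ∃ x y : K, x ≠ y ∧ (∀ b, b < a → fam (K := K) b x = fam (K := K) b y) ∧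
      fam (K := K) a x = 1 ∧ fam (K := K) a y = 0 ∧
      ∀ z, fam (K := K) a z ∈ Icc (0:ℝ) 1 := by
  have hc := fam_cond hK a
  have he : fam (K := K) a = hc.choose.1 := by
    rw [fam_eq]
    simp only [famStep]
    exact dif_pos hc
  obtain ⟨hne, hagree, h1, h0, hicc⟩ := hc.choose_spec
  exact ⟨hc.choose.2.1, hc.choose.2.2, hne, fun b hb => hagree b hb,
    by rw [he]; exact h1, by rw [he]; exact h0, fun z => by rw [he]; exact hicc z⟩

end Uncountable

end EquilateralAux

open EquilateralAux Set TopologicalSpace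

/-- The closed unit ball of `C(K × {0,1})` contains a `2`-equilateral set of
cardinality `w(K)`. -/
theorem statement2 (K : Type u) [TopologicalSpace K] [CompactSpace K] [T2Space K] [Infinite K] :
    ∃ A : Set C(K × Bool, ℝ), A ⊆ Metric.closedBall 0 1 ∧ #A = weight K ∧
      ∀ f ∈ A, ∀ g ∈ A, f ≠ g → ‖f - g‖ = 2 := by
  rcases (aleph0_le_weight K).eq_or_lt with heq | hlt
  · -- countable weight
    obtain ⟨x, U, hUopen, hxU, hUdisj⟩ := exists_disjoint_opens K
    have hury : ∀ n : ℕ, ∃ f : C(K, ℝ), Set.EqOn f 0 (U n)ᶜ ∧ Set.EqOn f 1 {x n} ∧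
        ∀ z, f z ∈ Icc (0:ℝ) 1 := fun n =>
      exists_continuous_zero_one_of_isClosed (hUopen n).isClosed_compl isClosed_singleton
        (by rw [Set.disjoint_singleton_right]; simp [hxU n])
    choose Fc h0 h1 _ using hury
    set g : ULift.{u} ℕ → C(K × Bool, ℝ) := fun n =>
      ⟨fun p => thA (Fc n.down p.1),
        thA_cont.comp ((Fc n.down).continuous.comp continuous_fst)⟩ with hg
    apply equilateral_of_family (ULift.{u} ℕ) g
    · intro a p
      exact thA_mem _
    · intro a b hab
      have hd : a.down ≠ b.down := fun h => hab (by cases a; cases b; cases h; rfl)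
      have e1 : Fc a.down (x a.down) = 1 := by simpa using h1 a.down rfl
      have e0 : Fc b.down (x a.down) = 0 := by
        have hmem : x a.down ∈ (U b.down)ᶜ :=
          Set.disjoint_left.mp (hUdisj a.down b.down hd) (hxU a.down)
        simpa using h0 b.down hmem
      refine ⟨(x a.down, false), Or.inl ⟨?_, ?_⟩⟩
      · show thA (Fc a.down (x a.down)) = 1
        rw [e1]; exact thA_one
      · show thA (Fc b.down (x a.down)) = -1
        rw [e0]; exact thA_zero
    · have : #(ULift.{u} ℕ) = ℵ₀ := by simp
      rw [this]; exact heq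
  · -- uncountable weight
    have hclopen : IsClopen {p : K × Bool | p.2 = true} :=
      (isClopen_discrete {true}).preimage continuous_snd
    set g : (weight K).ord.ToType → C(K × Bool, ℝ) := fun a =>
      ⟨fun p => if p.2 = true then thB (fam (K := K) a p.1) else thA (fam (K := K) a p.1), by
        refine Continuous.if (fun p hp => ?_)
          (thB_cont.comp ((fam (K := K) a).continuous.comp continuous_fst))
          (thA_cont.comp ((fam (K := K) a).continuous.comp continuous_fst))
        rw [hclopen.frontier_eq] at hp
        exact absurd hp (Set.notMem_empty _)⟩ with hgdef
    have gvalF : ∀ c xx, g c (xx, false) = thA (fam (K := K) c xx) := fun c xx => by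
      simp [hgdef]
    have gvalT : ∀ c xx, g c (xx, true) = thB (fam (K := K) c xx) := fun c xx => by
      simp [hgdef]
    have key : ∀ a b, b < a → ∃ p, g a p = 1 ∧ g b p = -1 ∨ g a p = -1 ∧ g b p = 1 := by
      intro a b hba
      obtain ⟨xx, yy, hxy, hag, hx1, hy0, _⟩ := fam_spec hlt a
      have hcc : fam (K := K) b xx = fam (K := K) b yy := hag b hba
      rcases th_trichotomy (fam (K := K) b xx) with h | h | h
      · refine ⟨(xx, false), Or.inl ⟨?_, ?_⟩⟩
        · rw [gvalF, hx1]; exact thA_one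
        · rw [gvalF, h]
      · refine ⟨(yy, false), Or.inr ⟨?_, ?_⟩⟩
        · rw [gvalF, hy0]; exact thA_zero
        · rw [gvalF, ← hcc, h]
      · refine ⟨(xx, true), Or.inr ⟨?_, ?_⟩⟩
        · rw [gvalT, hx1]; exact thB_one
        · rw [gvalT, h]
    apply equilateral_of_family _ g
    · intro a p
      rcases p with ⟨xx, b⟩
      cases b
      · rw [gvalF]; exact thA_mem _
      · rw [gvalT]; exact thB_mem _
    · intro a b hab
      rcases lt_or_gt_of_ne hab with h | h
      · obtain ⟨p, hp | hp⟩ := key b a h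
        · exact ⟨p, Or.inr ⟨hp.2, hp.1⟩⟩
        · exact ⟨p, Or.inl ⟨hp.2, hp.1⟩⟩
      · exact key a b h
    · rw [mk_toType]
      exact card_ord _
end

section
/- Let K be an infinite compact Hausdorff space which contains two disjoint closed subspaces that are homeomorphic to each other and have weight equal to w(K). Then the closed unit ball of C(K) contains a 2-equilateral set of cardinality w(K). -/
open Cardinal

open TopologicalSpace Set Filter Topology

section WeightLemmas

variable (X : Type u) [TopologicalSpace X]

lemma weight_nonempty_index :
    Nonempty {B : Set (Set X) // IsTopologicalBasis B} :=
  ⟨⟨_, isTopologicalBasis_opens⟩⟩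

lemma aleph0_le_weight : ℵ₀ ≤ weight X := by
  haveI := weight_nonempty_index X
  exact le_ciInf fun B => le_max_right _ _

lemma weight_le_basis {B : Set (Set X)} (hB : IsTopologicalBasis B) :
    weight X ≤ max #B ℵ₀ :=
  ciInf_le' _ (⟨B, hB⟩ : {B : Set (Set X) // IsTopologicalBasis B})

lemma secondCountable_of_weight_le (h : weight X ≤ ℵ₀) :
    SecondCountableTopology X := by
  by_contra hsc
  have hBig : ∀ B : {B : Set (Set X) // IsTopologicalBasis B}, ℵ₀ < max #B.1 ℵ₀ := by
    intro B
    rcases lt_or_ge ℵ₀ #B.1 with h' | h'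
    · exact lt_max_iff.mpr (Or.inl h')
    · exact absurd (B.2.secondCountableTopology
        (Set.countable_coe_iff.mp (mk_le_aleph0_iff.mp h'))) hsc
  haveI := weight_nonempty_index X
  have h2 : Order.succ ℵ₀ ≤ weight X :=
    le_ciInf fun B => Order.succ_le_of_lt (hBig B)
  exact absurd (Order.succ_le_iff.mp (h2.trans h)) (lt_irrefl _)

end WeightLemmas

section Separating

variable {X : Type u} [TopologicalSpace X] [CompactSpace X] [T2Space X]

lemma weight_le_of_separating {ι : Type u} (g : ι → C(X, ℝ))
    (hsep : ∀ x y : X, x ≠ y → ∃ i, g i x ≠ g i y) :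
    weight X ≤ max #ι ℵ₀ := by
  classical
  set D := ι × ℚ × ℚ with hD
  let T : List D → Set X := fun l =>
    ⋂ d ∈ l.toFinset, (g d.1) ⁻¹' Set.Ioo (d.2.1 : ℝ) (d.2.2 : ℝ)
  have hTmem : ∀ (l : List D) (z : X),
      z ∈ T l ↔ ∀ d ∈ l, g d.1 z ∈ Set.Ioo (d.2.1 : ℝ) (d.2.2 : ℝ) := by
    intro l z
    simp [T, Set.mem_iInter, List.mem_toFinset]
  have hbasis : IsTopologicalBasis (Set.range T) := by
    apply isTopologicalBasis_of_isOpen_of_nhds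
    · rintro _ ⟨l, rfl⟩
      exact isOpen_biInter_finset fun d _ =>
        ((g d.1).continuous.isOpen_preimage _ isOpen_Ioo)
    · intro a u hau hu
      have hC : IsCompact uᶜ := hu.isClosed_compl.isCompact
      have hdata : ∀ y : X, y ∈ uᶜ → ∃ d : D,
          g d.1 a ∈ Set.Ioo (d.2.1 : ℝ) (d.2.2 : ℝ) ∧
          g d.1 y ∉ Set.Icc (d.2.1 : ℝ) (d.2.2 : ℝ) := by
        intro y hy
        have hne : y ≠ a := fun h => hy (h ▸ hau)
        obtain ⟨i, hi⟩ := hsep y a hne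
        rcases lt_or_gt_of_ne hi with hlt | hgt
        · obtain ⟨q, hq1, hq2⟩ := exists_rat_btwn hlt
          obtain ⟨r, hr⟩ := exists_rat_gt (g i a)
          exact ⟨⟨i, q, r⟩, ⟨hq2, hr⟩, fun hmem => absurd hmem.1 (not_le.mpr hq1)⟩
        · obtain ⟨q, hq1, hq2⟩ := exists_rat_btwn hgt
          obtain ⟨r, hr⟩ := exists_rat_lt (g i a)
          exact ⟨⟨i, r, q⟩, ⟨hr, hq1⟩, fun hmem => absurd hmem.2 (not_le.mpr hq2)⟩
      choose d hd1 hd2 using hdata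
      obtain ⟨F, hF⟩ := hC.elim_finite_subcover
        (fun y : ↥uᶜ => ((g (d y.1 y.2).1) ⁻¹'
          (Set.Icc ((d y.1 y.2).2.1 : ℝ) ((d y.1 y.2).2.2 : ℝ)))ᶜ)
        (fun y => (isClosed_Icc.preimage (g _).continuous).isOpen_compl)
        (fun y hy => Set.mem_iUnion.mpr ⟨⟨y, hy⟩, by
          simpa using hd2 y hy⟩)
      refine ⟨T (F.toList.map fun y => d y.1 y.2), ⟨_, rfl⟩, ?_, ?_⟩
      · rw [hTmem]
        rintro d' hd'
        simp only [List.mem_map, Finset.mem_toList] at hd'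
        obtain ⟨y, _, rfl⟩ := hd'
        exact hd1 y.1 y.2
      · intro z hz
        by_contra hzu
        have hzC : z ∈ ⋃ y ∈ F, ((g (d y.1 y.2).1) ⁻¹'
            (Set.Icc ((d y.1 y.2).2.1 : ℝ) ((d y.1 y.2).2.2 : ℝ)))ᶜ := hF hzu
        rw [Set.mem_iUnion₂] at hzC
        obtain ⟨y, hyF, hyz⟩ := hzC
        rw [hTmem] at hz
        have : g (d y.1 y.2).1 z ∈ Set.Ioo ((d y.1 y.2).2.1 : ℝ) ((d y.1 y.2).2.2 : ℝ) :=
          hz _ (List.mem_map.mpr ⟨y, Finset.mem_toList.mpr hyF, rfl⟩)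
        exact hyz (Set.mem_Icc.mpr ⟨this.1.le, this.2.le⟩)
  have hcard : #(Set.range T) ≤ max #ι ℵ₀ := by
    have h1 : #(Set.range T) ≤ #(List D) := Cardinal.mk_range_le
    have h2 : #(List D) ≤ max ℵ₀ #D := Cardinal.mk_list_le_max D
    have h3 : #D ≤ max #ι ℵ₀ := by
      have : #D = #ι * ℵ₀ := by
        rw [hD, Cardinal.mk_prod]
        have : #(ℚ × ℚ) = ℵ₀ := by
          rw [Cardinal.mk_prod]
          simp [Cardinal.mk_eq_aleph0]
        rw [this]
        simp
      rw [this]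
      exact (Cardinal.mul_le_max _ _).trans (by simp [max_assoc])
    calc #(Set.range T) ≤ max ℵ₀ #D := h1.trans h2
      _ ≤ max ℵ₀ (max #ι ℵ₀) := max_le_max_left _ h3
      _ = max #ι ℵ₀ := by rw [max_comm ℵ₀, max_assoc]; simp
  calc weight X ≤ max #(Set.range T) ℵ₀ := weight_le_basis X hbasis
    _ ≤ max (max #ι ℵ₀) ℵ₀ := max_le_max_right _ hcard
    _ = max #ι ℵ₀ := by rw [max_assoc]; simp

lemma exists_unseparated {ι : Type u} (g : ι → C(X, ℝ))
    (hlt : max #ι ℵ₀ < weight X) :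
    ∃ x y : X, x ≠ y ∧ ∀ i, g i x = g i y := by
  by_contra hcon
  push_neg at hcon
  have : ∀ x y : X, x ≠ y → ∃ i, g i x ≠ g i y := by
    intro x y hxy
    obtain ⟨i, hi⟩ := hcon x y hxy
    exact ⟨i, hi⟩
  exact absurd (weight_le_of_separating g this) (not_le.mpr hlt)

end Separating

section Family

variable {K : Type u} [TopologicalSpace K] [CompactSpace K] [T2Space K]

lemma equilateral_of_family {ι : Type u} [LinearOrder ι] (F : ι → C(K, ℝ))
    (hb : ∀ i, ‖F i‖ ≤ 1)
    (hd : ∀ j i : ι, j < i → ∃ z : K, |F i z - F j z| = 2) :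
    ∃ S : Set C(K, ℝ), S ⊆ Metric.closedBall 0 1 ∧ #S = #ι ∧
      ∀ f ∈ S, ∀ g ∈ S, f ≠ g → ‖f - g‖ = 2 := by
  have key : ∀ j i : ι, j < i → ‖F i - F j‖ = 2 := by
    intro j i hji
    obtain ⟨z, hz⟩ := hd j i hji
    refine le_antisymm ?_ ?_
    · calc ‖F i - F j‖ ≤ ‖F i‖ + ‖F j‖ := norm_sub_le _ _
        _ ≤ 2 := by linarith [hb i, hb j]
    · have h1 : ‖(F i - F j) z‖ ≤ ‖F i - F j‖ := ContinuousMap.norm_coe_le_norm _ z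
      rw [ContinuousMap.sub_apply, Real.norm_eq_abs, hz] at h1
      exact h1
  have key2 : ∀ i j : ι, i ≠ j → ‖F i - F j‖ = 2 := by
    intro i j hij
    rcases hij.lt_or_gt with h | h
    · rw [← norm_neg, neg_sub]
      exact key i j h
    · exact key j i h
  have hinj : Function.Injective F := by
    intro i j hEq
    by_contra hne
    have h2 := key2 i j hne
    rw [hEq, sub_self, norm_zero] at h2
    norm_num at h2
  refine ⟨Set.range F, ?_, ?_, ?_⟩
  · rintro _ ⟨i, rfl⟩
    simpa [Metric.mem_closedBall, dist_zero_right] using hb i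
  · exact Cardinal.mk_range_eq F hinj
  · rintro _ ⟨i, rfl⟩ _ ⟨j, rfl⟩ hne
    exact key2 i j fun h => hne (congrArg F h)

end Family

section Sequence

lemma exists_inj_tendsto (K : Type u) [TopologicalSpace K] [CompactSpace K] [T2Space K]
    [Infinite K] [FirstCountableTopology K] :
    ∃ (z : ℕ → K) (zl : K), Function.Injective z ∧ (∀ n, z n ≠ zl) ∧
      Filter.Tendsto z Filter.atTop (𝓝 zl) := by
  let u := Infinite.natEmbedding K
  obtain ⟨a, -, φ, hφ, hta⟩ := isCompact_univ.tendsto_subseq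
    (x := fun n => u n) (fun n => trivial)
  set v : ℕ → K := fun n => u (φ n) with hv
  have hvi : Function.Injective v := u.injective.comp hφ.injective
  have hta' : Filter.Tendsto v Filter.atTop (𝓝 a) := hta
  by_cases hex : ∃ N, v N = a
  · obtain ⟨N, hN⟩ := hex
    refine ⟨fun n => v (n + (N + 1)), a, ?_, ?_, ?_⟩
    · intro m n hmn
      have := hvi hmn
      omega
    · intro n hn
      have : n + (N + 1) = N := hvi (hn.trans hN.symm)
      omega
    · exact hta'.comp (Filter.tendsto_add_atTop_nat (N + 1))
  · push_neg at hex
    exact ⟨v, a, hvi, hex, hta'⟩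

end Sequence

section Clamp

/-- clamping to `[-1,1]`. -/
noncomputable def clampC : C(ℝ, ℝ) :=
  ⟨fun t => max (-1) (min 1 t), by
    exact continuous_const.max (continuous_const.min continuous_id)⟩

lemma abs_clampC_le (t : ℝ) : |clampC t| ≤ 1 := by
  rw [abs_le]
  constructor
  · exact le_max_left _ _
  · exact max_le (by norm_num) (min_le_left _ _)

lemma clampC_of_le (t : ℝ) (h : t ≤ -1) : clampC t = -1 := by
  have h1 : min 1 t = t := min_eq_right (h.trans (by norm_num))
  show max (-1) (min 1 t) = -1
  rw [h1]
  exact max_eq_left h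

lemma clampC_of_ge (t : ℝ) (h : 1 ≤ t) : clampC t = 1 := by
  show max (-1) (min 1 t) = 1
  rw [min_eq_left h]
  exact max_eq_right (by norm_num)

/-- `ψ(t) = clamp (1 - 4t)`. -/
noncomputable def PsiC : C(ℝ, ℝ) :=
  clampC.comp ⟨fun t => 1 - 4 * t, by continuity⟩

/-- `χ(t) = clamp (4t - 3)`. -/
noncomputable def ChiC : C(ℝ, ℝ) :=
  clampC.comp ⟨fun t => 4 * t - 3, by continuity⟩

lemma abs_PsiC_le (t : ℝ) : |PsiC t| ≤ 1 := abs_clampC_le _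

lemma abs_ChiC_le (t : ℝ) : |ChiC t| ≤ 1 := abs_clampC_le _

lemma PsiC_zero : PsiC 0 = 1 := by
  show clampC (1 - 4 * 0) = 1
  apply clampC_of_ge; norm_num

lemma PsiC_of_half_le (t : ℝ) (h : 1 / 2 ≤ t) : PsiC t = -1 := by
  show clampC (1 - 4 * t) = -1
  apply clampC_of_le; linarith

lemma ChiC_one : ChiC 1 = 1 := by
  show clampC (4 * 1 - 3) = 1
  apply clampC_of_ge; norm_num

lemma ChiC_of_le_half (t : ℝ) (h : t ≤ 1 / 2) : ChiC t = -1 := by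
  show clampC (4 * t - 3) = -1
  apply clampC_of_le; linarith

lemma comb_bound {a u v : ℝ} (ha : a ∈ Set.Icc (0 : ℝ) 1) (hu : |u| ≤ 1) (hv : |v| ≤ 1) :
    |(1 - a) * u + a * v| ≤ 1 := by
  obtain ⟨ha0, ha1⟩ := ha
  calc |(1 - a) * u + a * v| ≤ |(1 - a) * u| + |a * v| := abs_add_le _ _
    _ = (1 - a) * |u| + a * |v| := by
        rw [abs_mul, abs_mul, abs_of_nonneg (by linarith), abs_of_nonneg ha0]
    _ ≤ (1 - a) * 1 + a * 1 := by
        exact add_le_add (mul_le_mul_of_nonneg_left hu (by linarith))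
          (mul_le_mul_of_nonneg_left hv ha0)
    _ = 1 := by ring

end Clamp

/-- If `K` contains two disjoint closed homeomorphic subspaces of weight `w(K)`, then the closed
unit ball of `C(K)` contains a `2`-equilateral set of cardinality `w(K)`. -/
theorem statement3 (K : Type u) [TopologicalSpace K] [CompactSpace K] [T2Space K] [Infinite K]
    (h : ∃ A B : Set K, IsClosed A ∧ IsClosed B ∧ Disjoint A B ∧ Nonempty (A ≃ₜ B) ∧
      weight A = weight K ∧ weight B = weight K) :
    ∃ S : Set C(K, ℝ), S ⊆ Metric.closedBall 0 1 ∧ #S = weight K ∧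
      ∀ f ∈ S, ∀ g ∈ S, f ≠ g → ‖f - g‖ = 2 := by
  classical
  obtain ⟨A, B, hA, hB, hAB, ⟨φ⟩, hwA, hwB⟩ := h
  rcases eq_or_lt_of_le (aleph0_le_weight K) with hk | hk
  · -- countable-weight case
    haveI : SecondCountableTopology K := secondCountable_of_weight_le K hk.ge
    obtain ⟨z, zl, hzi, hzne, hzt⟩ := exists_inj_tendsto K
    have hg : ∀ n : ℕ, ∃ gg : C(K, ℝ),
        Set.EqOn gg 0 (insert zl (Set.range fun m => z (m + (n + 1)))) ∧
        Set.EqOn gg 1 {z n} ∧ ∀ x, gg x ∈ Set.Icc (0 : ℝ) 1 := by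
      intro n
      have hcpt : IsCompact (insert zl (Set.range fun m => z (m + (n + 1)))) :=
        (hzt.comp (Filter.tendsto_add_atTop_nat (n + 1))).isCompact_insert_range
      apply exists_continuous_zero_one_of_isClosed hcpt.isClosed isClosed_singleton
      rw [Set.disjoint_singleton_right]
      rintro (hzz | ⟨m, hm⟩)
      · exact hzne n hzz
      · have := hzi hm
        omega
    choose g hg0 hg1 hg01 using hg
    let F : ULift.{u} ℕ → C(K, ℝ) := fun n => (2 : ℝ) • g n.down - 1
    have hFapply : ∀ (n : ULift.{u} ℕ) (x : K), F n x = 2 * g n.down x - 1 := by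
      intro n x
      simp [F]
    have hFb : ∀ n, ‖F n‖ ≤ 1 := by
      intro n
      rw [ContinuousMap.norm_le _ zero_le_one]
      intro x
      rw [hFapply, Real.norm_eq_abs, abs_le]
      obtain ⟨h0, h1⟩ := hg01 n.down x
      constructor <;> linarith
    have hFd : ∀ j i : ULift.{u} ℕ, j < i → ∃ x : K, |F i x - F j x| = 2 := by
      intro j i hji
      have hji' : j.down < i.down := hji
      refine ⟨z i.down, ?_⟩
      have h1 : g i.down (z i.down) = 1 := by
        have := hg1 i.down (Set.mem_singleton _)
        simpa using this
      have h0 : g j.down (z i.down) = 0 := by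
        have hmem : z i.down ∈ insert zl (Set.range fun m => z (m + (j.down + 1))) := by
          refine Set.mem_insert_iff.mpr (Or.inr ⟨i.down - (j.down + 1), ?_⟩)
          have harith : i.down - (j.down + 1) + (j.down + 1) = i.down := by omega
          simp only [harith]
        have := hg0 j.down hmem
        simpa using this
      rw [hFapply, hFapply, h1, h0]
      norm_num
    obtain ⟨S, hS1, hS2, hS3⟩ := equilateral_of_family F hFb hFd
    refine ⟨S, hS1, ?_, hS3⟩
    rw [hS2, ← hk]
    simp
  · -- uncountable-weight case
    haveI : CompactSpace ↥A := isCompact_iff_compactSpace.mp hA.isCompact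
    obtain ⟨p, hp0, hp1, hp01⟩ := exists_continuous_zero_one_of_isClosed hA hB hAB
    set κ := weight K with hκdef
    let ι := κ.ord.ToType
    have hstep : ∀ (i : ι) (prev : ↥(Set.Iio i) → K × K × C(K, ℝ)),
        ∃ q : K × K × C(K, ℝ), q.1 ∈ A ∧ q.2.1 ∈ A ∧ q.2.2 q.1 = 0 ∧ q.2.2 q.2.1 = 1 ∧
          ∀ j : ↥(Set.Iio i), (prev j).2.2 q.1 = (prev j).2.2 q.2.1 := by
      intro i prev
      have hcard : max #(↥(Set.Iio i)) ℵ₀ < weight ↥A := by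
        rw [hwA]
        exact max_lt (Cardinal.mk_Iio_ord_toType i) hk
      obtain ⟨x, y, hxy, hsame⟩ := exists_unseparated
        (fun j : ↥(Set.Iio i) => ((prev j).2.2).restrict A) hcard
      have hxyK : (x : K) ≠ (y : K) := Subtype.coe_injective.ne hxy
      obtain ⟨w, hw0, hw1, hw01⟩ := exists_continuous_zero_one_of_isClosed
        (isClosed_singleton (x := (x : K))) (isClosed_singleton (x := (y : K)))
        (by simpa using hxyK)
      refine ⟨⟨(x : K), (y : K), w⟩, x.2, y.2, ?_, ?_, fun j => ?_⟩
      · simpa using hw0 (Set.mem_singleton _)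
      · simpa using hw1 (Set.mem_singleton _)
      · simpa [ContinuousMap.restrict_apply] using hsame j
    let step : (i : ι) → (∀ j, j < i → K × K × C(K, ℝ)) → K × K × C(K, ℝ) :=
      fun i IH => Classical.choose (hstep i (fun j => IH j.1 j.2))
    let G : ι → K × K × C(K, ℝ) := WellFounded.fix wellFounded_lt step
    have hGspec : ∀ i : ι, (G i).1 ∈ A ∧ (G i).2.1 ∈ A ∧ (G i).2.2 (G i).1 = 0 ∧
        (G i).2.2 (G i).2.1 = 1 ∧
        ∀ j : ↥(Set.Iio i), (G j.1).2.2 (G i).1 = (G j.1).2.2 (G i).2.1 := by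
      intro i
      have heq : G i = step i (fun j _ => G j) := WellFounded.fix_eq _ _ i
      rw [heq]
      exact Classical.choose_spec (hstep i (fun j => G j.1))
    let ww : ι → C(K, ℝ) := fun i => (G i).2.2
    have hVex : ∀ i : ι, ∃ V : C(K, ℝ), ∀ b : ↥B, V b = ww i (φ.symm b) := by
      intro i
      obtain ⟨V, hV⟩ := ContinuousMap.exists_restrict_eq hB
        (⟨fun b : ↥B => ww i (φ.symm b),
          (ww i).continuous.comp (continuous_subtype_val.comp φ.symm.continuous)⟩ : C(↥B, ℝ))
      refine ⟨V, fun b => ?_⟩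
      have := ContinuousMap.congr_fun hV b
      simpa [ContinuousMap.restrict_apply] using this
    choose V hVspec using hVex
    let F : ι → C(K, ℝ) := fun i => (1 - p) * (PsiC.comp (ww i)) + p * (ChiC.comp (V i))
    have hFapply : ∀ (i : ι) (x : K),
        F i x = (1 - p x) * PsiC (ww i x) + p x * ChiC (V i x) := by
      intro i x
      simp [F]
    have hFb : ∀ i, ‖F i‖ ≤ 1 := by
      intro i
      rw [ContinuousMap.norm_le _ zero_le_one]
      intro x
      rw [hFapply, Real.norm_eq_abs]
      exact comb_bound (hp01 x) (abs_PsiC_le _) (abs_ChiC_le _)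
    have hFd : ∀ j i : ι, j < i → ∃ x : K, |F i x - F j x| = 2 := by
      intro j i hji
      obtain ⟨hxA, hyA, hwx, hwy, hprev⟩ := hGspec i
      have ht2 : ww j (G i).1 = ww j (G i).2.1 := hprev ⟨j, hji⟩
      rcases le_total (ww j (G i).2.1) (1 / 2 : ℝ) with hcase | hcase
      · -- evaluate at φ(yᵢ) ∈ B
        set b : ↥B := φ ⟨(G i).2.1, hyA⟩ with hbdef
        refine ⟨(b : K), ?_⟩
        have hpb : p (b : K) = 1 := by
          simpa using hp1 b.2
        have hVib : V i (b : K) = ww i (G i).2.1 := by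
          rw [hVspec i b, hbdef]
          simp
        have hVjb : V j (b : K) = ww j (G i).2.1 := by
          rw [hVspec j b, hbdef]
          simp
        have h1 : ChiC (V i (b : K)) = 1 := by rw [hVib, hwy]; exact ChiC_one
        have h2 : ChiC (V j (b : K)) = -1 := by
          rw [hVjb]; exact ChiC_of_le_half _ hcase
        rw [hFapply, hFapply, hpb, h1, h2]
        norm_num
      · -- evaluate at xᵢ ∈ A
        refine ⟨(G i).1, ?_⟩
        have hpx : p (G i).1 = 0 := by
          simpa using hp0 hxA
        have h1 : PsiC (ww i (G i).1) = 1 := by rw [show ww i (G i).1 = 0 from hwx]; exact PsiC_zero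
        have h2 : PsiC (ww j (G i).1) = -1 := by
          rw [ht2]; exact PsiC_of_half_le _ hcase
        rw [hFapply, hFapply, hpx, h1, h2]
        norm_num
    obtain ⟨S, hS1, hS2, hS3⟩ := equilateral_of_family F hFb hFd
    refine ⟨S, hS1, ?_, hS3⟩
    rw [hS2]
    exact Cardinal.mk_ord_toType κ
end

section
/- Let K be an infinite compact Hausdorff space, let κ = w(K), and let λ be a cardinal such that the partition relation κ → (λ)²₂ holds. Then the closed unit ball of C(K) contains a 2-equilateral set of cardinality λ. -/
open Cardinal

/-- The partition relation `κ → (λ)²₂`: for every set `X` of cardinality `κ` and every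
`2`-coloring of the two-element subsets of `X`, there is a subset `Y` of cardinality `λ`
all of whose two-element subsets get the same color. -/
def PartitionArrow (κ lam : Cardinal.{u}) : Prop :=
  ∀ (X : Type u), #X = κ →
    ∀ F : {p : Finset X // p.card = 2} → Bool,
      ∃ Y : Set X, #Y = lam ∧
        ∃ c : Bool, ∀ p : {p : Finset X // p.card = 2}, (p.1 : Set X) ⊆ Y → F p = c

section Aux

variable {K : Type u} [TopologicalSpace K] [CompactSpace K] [T2Space K]

/-- If an infinite family of continuous functions separates the points of `K`, then the
weight of `K` is at most the cardinality of the family. -/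
lemma weight_le_of_separating_s8 (D : Set C(K, ℝ)) (hD : D.Infinite)
    (hsep : ∀ x y : K, x ≠ y → ∃ f ∈ D, f x ≠ f y) : weight K ≤ #D := by
  classical
  obtain ⟨b, hbc, -, hb⟩ := TopologicalSpace.exists_countable_basis ℝ
  let S : Set (Set K) := ⋃ f : D, (fun s => (⇑(f : C(K, ℝ))) ⁻¹' s) '' b
  have key : ∀ f : K → ℝ, TopologicalSpace.induced f inferInstance =
      TopologicalSpace.generateFrom ((fun s => f ⁻¹' s) '' b) := by
    intro f
    conv_lhs => rw [hb.eq_generateFrom]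
    exact induced_generateFrom_eq
  have hiInf : TopologicalSpace.generateFrom S =
      ⨅ f : D, TopologicalSpace.induced (⇑(f : C(K, ℝ))) inferInstance := by
    rw [show S = ⋃ f : D, (fun s => (⇑(f : C(K, ℝ))) ⁻¹' s) '' b from rfl,
      generateFrom_iUnion]
    congr 1
    funext f
    rw [key]
  have hcont' : ∀ f : C(K, ℝ), f ∈ D →
      @Continuous K ℝ (TopologicalSpace.generateFrom S) _ ⇑f := by
    intro f hf
    refine continuous_iff_le_induced.mpr ?_
    rw [hiInf]
    exact iInf_le (fun g : D => TopologicalSpace.induced (⇑(g : C(K, ℝ))) inferInstance) ⟨f, hf⟩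
  have hle1 : (inferInstance : TopologicalSpace K) ≤ TopologicalSpace.generateFrom S := by
    rw [hiInf]
    exact le_iInf fun f => continuous_iff_le_induced.mp (map_continuous (f : C(K, ℝ)))
  have hopen : ∀ f : C(K, ℝ), f ∈ D → ∀ u : Set ℝ, IsOpen u →
      @IsOpen K (TopologicalSpace.generateFrom S) (⇑f ⁻¹' u) := fun f hf u hu =>
    (@continuous_def K ℝ (TopologicalSpace.generateFrom S) _ ⇑f).mp (hcont' f hf) u hu
  have ht2' : @T2Space K (TopologicalSpace.generateFrom S) := by
    refine @T2Space.mk K (TopologicalSpace.generateFrom S) fun x y hxy => ?_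
    obtain ⟨f, hfD, hfxy⟩ := hsep x y hxy
    obtain ⟨u, v, hu, hv, hxu, hyv, huv⟩ := t2_separation hfxy
    exact ⟨⇑f ⁻¹' u, ⇑f ⁻¹' v, hopen f hfD u hu, hopen f hfD v hv, hxu, hyv, huv.preimage _⟩
  have hle2 : TopologicalSpace.generateFrom S ≤ (inferInstance : TopologicalSpace K) := by
    rw [TopologicalSpace.le_def]
    intro U hU
    have hUc : IsCompact Uᶜ := (isClosed_compl_iff.mpr hU).isCompact
    have hUc' : @IsCompact K (TopologicalSpace.generateFrom S) Uᶜ := by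
      have hidc : @Continuous K K _ (TopologicalSpace.generateFrom S) id :=
        continuous_id_iff_le.mpr hle1
      simpa [Set.image_id] using
        @IsCompact.image K K _ (TopologicalSpace.generateFrom S) Uᶜ id hUc hidc
    have hcl : @IsClosed K (TopologicalSpace.generateFrom S) Uᶜ :=
      @IsCompact.isClosed K (TopologicalSpace.generateFrom S) ht2' _ hUc'
    rw [← compl_compl U]
    exact (@isOpen_compl_iff K Uᶜ (TopologicalSpace.generateFrom S)).mpr hcl
  have hts : (inferInstance : TopologicalSpace K) = TopologicalSpace.generateFrom S :=
    le_antisymm hle1 hle2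
  -- cardinality estimates
  have haleD : ℵ₀ ≤ #D := aleph0_le_mk_iff.mpr hD.to_subtype
  have hSD : #S ≤ #D := by
    have h1 : #S ≤ #D * ⨆ f : D, #((fun s => (⇑(f : C(K, ℝ))) ⁻¹' s) '' b) := mk_iUnion_le _
    have h2 : (⨆ f : D, #((fun s => (⇑(f : C(K, ℝ))) ⁻¹' s) '' b)) ≤ ℵ₀ := by
      refine ciSup_le' fun f => ?_
      haveI := (hbc.image (fun s => (⇑(f : C(K, ℝ))) ⁻¹' s)).to_subtype
      exact mk_le_aleph0
    calc #S ≤ #D * ℵ₀ := h1.trans (mul_le_mul_right h2 _)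
    _ = #D := mul_aleph0_eq haleD
  have hfinsetle : ∀ (α : Type u), #(Finset α) ≤ max #α ℵ₀ := by
    intro α
    rcases finite_or_infinite α with h | h
    · haveI := h
      haveI := Fintype.ofFinite α
      exact le_max_of_le_right (lt_aleph0_of_finite (Finset α)).le
    · haveI := h
      rw [mk_finset_of_infinite]; exact le_max_left _ _
  have hT : #({f : Set (Set K) | f.Finite ∧ f ⊆ S}) ≤ #(Finset S) := by
    have hTsub : {f : Set (Set K) | f.Finite ∧ f ⊆ S} ⊆
        Set.range (fun fs : Finset S => (Subtype.val '' (fs : Set S) : Set (Set K))) := by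
      rintro t ⟨htf, htS⟩
      have hfin : (Subtype.val ⁻¹' t : Set S).Finite :=
        htf.preimage (Set.injOn_of_injective Subtype.val_injective)
      refine ⟨hfin.toFinset, ?_⟩
      show Subtype.val '' (hfin.toFinset : Set S) = t
      rw [Set.Finite.coe_toFinset, Set.image_preimage_eq_inter_range, Subtype.range_coe]
      exact Set.inter_eq_self_of_subset_left htS
    exact (mk_le_mk_of_subset hTsub).trans mk_range_le
  simp only [weight]
  refine le_trans (ciInf_le' _ ⟨_, TopologicalSpace.isTopologicalBasis_of_subbasis hts⟩)
    (max_le ?_ haleD)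
  refine mk_image_le.trans (hT.trans ((hfinsetle S).trans (max_le hSD haleD)))

/-- Given fewer than `w(K)` continuous functions, we can find two distinct points on which
all of them almost agree. -/
lemma exists_close_pair [Infinite K] (D : Set C(K, ℝ)) (hD : #D < weight K) :
    ∃ x y : K, x ≠ y ∧ ∀ f ∈ D, |f x - f y| ≤ 1 / 8 := by
  classical
  rcases D.finite_or_infinite with hfin | hinf
  · haveI := hfin.fintype
    set q : K → (D → ℤ) := fun t f => ⌊(f : C(K, ℝ)) t * 8⌋ with hq
    have hrange : (Set.range q).Finite := by
      refine Set.Finite.subset (Set.Finite.pi fun f : D =>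
        Set.finite_Icc ⌊-(‖(f : C(K, ℝ))‖ * 8)⌋ ⌊‖(f : C(K, ℝ))‖ * 8⌋) ?_
      rintro _ ⟨t, rfl⟩
      rw [Set.mem_univ_pi]
      intro f
      have h1 : |(f : C(K, ℝ)) t| ≤ ‖(f : C(K, ℝ))‖ := by
        rw [← Real.norm_eq_abs]; exact ContinuousMap.norm_coe_le_norm _ t
      have h1' := abs_le.mp h1
      simp only [Set.mem_Icc, hq]
      constructor
      · exact Int.floor_le_floor (by nlinarith [h1'.1])
      · exact Int.floor_le_floor (by nlinarith [h1'.2])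
    obtain ⟨x, -, y, -, hxy, hqeq⟩ :=
      Set.infinite_univ.exists_ne_map_eq_of_mapsTo
        (fun t (_ : t ∈ (Set.univ : Set K)) => Set.mem_range_self t) hrange
    refine ⟨x, y, hxy, fun f hf => ?_⟩
    have h1 : ⌊f x * 8⌋ = ⌊f y * 8⌋ := congrFun hqeq ⟨f, hf⟩
    have h2 : |f x * 8 - f y * 8| < 1 := Int.abs_sub_lt_one_of_floor_eq_floor h1
    rw [show f x * 8 - f y * 8 = (f x - f y) * 8 by ring, abs_mul] at h2
    have h3 : |(8 : ℝ)| = 8 := by norm_num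
    rw [h3] at h2
    linarith [abs_nonneg (f x - f y)]
  · by_contra hcon
    push_neg at hcon
    have hsep : ∀ x y : K, x ≠ y → ∃ f ∈ D, f x ≠ f y := by
      intro x y hxy
      obtain ⟨f, hfD, hf⟩ := hcon x y hxy
      refine ⟨f, hfD, fun h => ?_⟩
      rw [h, sub_self, abs_zero] at hf
      linarith
    exact absurd (weight_le_of_separating_s8 D hinf hsep) (not_le.mpr hD)

/-- A good triple for a family `D`: two distinct points almost unseparated by every member
of `D`, together with a Urysohn function for the two points. -/
def GoodTriple (D : Set C(K, ℝ)) (v : K × K × C(K, ℝ)) : Prop :=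
  v.1 ≠ v.2.1 ∧ v.2.2 v.1 = 0 ∧ v.2.2 v.2.1 = 1 ∧ (∀ t, v.2.2 t ∈ Set.Icc (0 : ℝ) 1) ∧
    ∀ g ∈ D, |g v.1 - g v.2.1| ≤ 1 / 8

lemma exists_goodTriple [Infinite K] (D : Set C(K, ℝ)) (hD : #D < weight K) :
    ∃ v, GoodTriple D v := by
  obtain ⟨x, y, hxy, hcl⟩ := exists_close_pair D hD
  obtain ⟨f, hf0, hf1, hficc⟩ := exists_continuous_zero_one_of_isClosed
    (isClosed_singleton (x := x)) (isClosed_singleton (x := y))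
    (Set.disjoint_singleton.mpr hxy)
  exact ⟨(x, y, f), hxy, by simpa using hf0 rfl, by simpa using hf1 rfl, hficc, hcl⟩

open Classical in
/-- Choice of a good triple. -/
noncomputable def stepT [Infinite K] (D : Set C(K, ℝ)) : K × K × C(K, ℝ) :=
  if h : ∃ v, GoodTriple D v then h.choose
  else (Classical.arbitrary K, Classical.arbitrary K, 0)

lemma stepT_spec [Infinite K] {D : Set C(K, ℝ)} (hD : #D < weight K) :
    GoodTriple D (stepT D) := by
  have hex := exists_goodTriple D hD
  rw [stepT, dif_pos hex]
  exact hex.choose_spec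

variable (K) in
/-- The transfinite family of good triples. -/
noncomputable def famT [Infinite K] : (weight K).ord.ToType → K × K × C(K, ℝ) :=
  wellFounded_lt.fix
    (fun ξ rec => stepT {g | ∃ ζ, ∃ h : ζ < ξ, (rec ζ h).2.2 = g})

lemma famT_def [Infinite K] (ξ : (weight K).ord.ToType) :
    famT K ξ = stepT ((fun ζ => (famT K ζ).2.2) '' Set.Iio ξ) := by
  rw [famT, WellFounded.fix_eq]
  congr 1
  ext g
  simp [Set.mem_image, famT]

lemma famT_spec [Infinite K] (ξ : (weight K).ord.ToType) :
    GoodTriple ((fun ζ => (famT K ζ).2.2) '' Set.Iio ξ) (famT K ξ) := by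
  rw [famT_def]
  exact stepT_spec (lt_of_le_of_lt mk_image_le (mk_Iio_ord_toType ξ))

/-- Clamped affine transform of a continuous function. -/
noncomputable def clampF (a b : ℝ) (f : C(K, ℝ)) : C(K, ℝ) :=
  ⟨fun t => max (-1) (min 1 (a * f t + b)),
    continuous_const.max (continuous_const.min
      ((continuous_const.mul (map_continuous f)).add continuous_const))⟩

lemma clampF_apply (a b : ℝ) (f : C(K, ℝ)) (t : K) :
    clampF a b f t = max (-1) (min 1 (a * f t + b)) := rfl

lemma norm_clampF_le (a b : ℝ) (f : C(K, ℝ)) : ‖clampF a b f‖ ≤ 1 := by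
  rw [ContinuousMap.norm_le _ zero_le_one]
  intro t
  rw [Real.norm_eq_abs, abs_le, clampF_apply]
  exact ⟨le_max_left _ _, max_le (by norm_num) (min_le_left _ _)⟩

lemma clampF_eq_one {a b : ℝ} {f : C(K, ℝ)} {t : K} (h : 1 ≤ a * f t + b) :
    clampF a b f t = 1 := by
  rw [clampF_apply, min_eq_left h, max_eq_right (by norm_num)]

lemma clampF_eq_neg_one {a b : ℝ} {f : C(K, ℝ)} {t : K} (h : a * f t + b ≤ -1) :
    clampF a b f t = -1 := by
  rw [clampF_apply, min_eq_right (h.trans (by norm_num)), max_eq_left h]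

lemma norm_sub_eq_two {g h : C(K, ℝ)} (hg : ‖g‖ ≤ 1) (hh : ‖h‖ ≤ 1) (t : K)
    (h1 : g t = 1) (h2 : h t = -1) : ‖g - h‖ = 2 := by
  refine le_antisymm ((norm_sub_le g h).trans (by linarith)) ?_
  have h3 : ‖(g - h) t‖ ≤ ‖g - h‖ := ContinuousMap.norm_coe_le_norm _ t
  rw [ContinuousMap.sub_apply, h1, h2] at h3
  norm_num [Real.norm_eq_abs] at h3
  linarith

end Aux

/-- If `κ = w(K)` and `κ → (λ)²₂`, then the closed unit ball of `C(K)` contains a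
`2`-equilateral set of cardinality `λ`. -/
theorem statement8 (K : Type u) [TopologicalSpace K] [CompactSpace K] [T2Space K] [Infinite K]
    (lam : Cardinal.{u}) (harrow : PartitionArrow (weight K) lam) :
    ∃ A : Set C(K, ℝ), A ⊆ Metric.closedBall 0 1 ∧ #A = lam ∧
      ∀ f ∈ A, ∀ g ∈ A, f ≠ g → ‖f - g‖ = 2 := by
  classical
  let ι := (weight K).ord.ToType
  let fP : ι → C(K, ℝ) := fun ξ => (famT K ξ).2.2
  let xP : ι → K := fun ξ => (famT K ξ).1
  let yP : ι → K := fun ξ => (famT K ξ).2.1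
  have hf0 : ∀ ξ, fP ξ (xP ξ) = 0 := fun ξ => (famT_spec ξ).2.1
  have hf1 : ∀ ξ, fP ξ (yP ξ) = 1 := fun ξ => (famT_spec ξ).2.2.1
  have hclose : ∀ ζ ξ : ι, ζ < ξ → |fP ζ (xP ξ) - fP ζ (yP ξ)| ≤ 1 / 8 :=
    fun ζ ξ h => (famT_spec ξ).2.2.2.2 (fP ζ) ⟨ζ, h, rfl⟩
  have hne2 : ∀ p : {p : Finset ι // p.card = 2}, p.1.Nonempty :=
    fun p => Finset.card_pos.mp (by rw [p.2]; norm_num)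
  obtain ⟨Y, hYcard, c, hc⟩ := harrow ι (mk_ord_toType _)
    (fun p => decide (fP (p.1.min' (hne2 p)) (xP (p.1.max' (hne2 p))) ≤ 1 / 2))
  have hpair : ∀ ξ η : ι, ξ ∈ Y → η ∈ Y → ξ < η →
      decide (fP ξ (xP η) ≤ 1 / 2) = c := by
    intro ξ η hξ hη hlt
    have hne := ne_of_lt hlt
    have hp2 : ({ξ, η} : Finset ι).card = 2 := Finset.card_pair hne
    have hsub : (({ξ, η} : Finset ι) : Set ι) ⊆ Y := by
      intro z hz
      simp only [Finset.coe_insert, Finset.coe_singleton, Set.mem_insert_iff,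
        Set.mem_singleton_iff] at hz
      rcases hz with rfl | rfl
      exacts [hξ, hη]
    have hmin : ({ξ, η} : Finset ι).min' (hne2 ⟨_, hp2⟩) = ξ := by
      refine le_antisymm (Finset.min'_le _ _ (by simp)) (Finset.le_min' _ _ _ ?_)
      intro z hz
      rcases Finset.mem_insert.mp hz with rfl | hz
      · exact le_refl _
      · rw [Finset.mem_singleton.mp hz]; exact le_of_lt hlt
    have hmax : ({ξ, η} : Finset ι).max' (hne2 ⟨_, hp2⟩) = η := by
      refine le_antisymm (Finset.max'_le _ _ _ ?_) (Finset.le_max' _ _ (by simp))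
      intro z hz
      rcases Finset.mem_insert.mp hz with rfl | hz
      · exact le_of_lt hlt
      · rw [Finset.mem_singleton.mp hz]
    have hcf := hc ⟨{ξ, η}, hp2⟩ hsub
    dsimp only at hcf
    rwa [hmin, hmax] at hcf
  suffices H : ∃ gg : ι → C(K, ℝ), (∀ ξ, ‖gg ξ‖ ≤ 1) ∧
      ∀ ξ ∈ Y, ∀ η ∈ Y, ξ < η → ‖gg ξ - gg η‖ = 2 by
    obtain ⟨gg, hb1, hk⟩ := H
    have hinj : Set.InjOn gg Y := by
      intro ξ hξ η hη hEq
      by_contra hne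
      have h2 : (2 : ℝ) ≠ 0 := by norm_num
      rcases lt_or_gt_of_ne hne with h | h
      · have := hk ξ hξ η hη h
        rw [hEq, sub_self, norm_zero] at this
        exact h2 this.symm
      · have := hk η hη ξ hξ h
        rw [hEq, sub_self, norm_zero] at this
        exact h2 this.symm
    refine ⟨gg '' Y, ?_, ?_, ?_⟩
    · rintro _ ⟨ξ, hξ, rfl⟩
      rw [Metric.mem_closedBall, dist_zero_right]
      exact hb1 ξ
    · rw [mk_image_eq_of_injOn _ _ hinj, hYcard]
    · rintro _ ⟨ξ, hξ, rfl⟩ _ ⟨η, hη, rfl⟩ hne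
      have hne' : ξ ≠ η := fun h => hne (by rw [h])
      rcases lt_or_gt_of_ne hne' with h | h
      · exact hk ξ hξ η hη h
      · rw [norm_sub_rev]; exact hk η hη ξ hξ h
  cases c with
  | true =>
    refine ⟨fun ξ => clampF (16 / 3) (-13 / 3) (fP ξ), fun ξ => norm_clampF_le _ _ _, ?_⟩
    intro ξ hξ η hη hlt
    have h1 : fP ξ (xP η) ≤ 1 / 2 := of_decide_eq_true (hpair ξ η hξ hη hlt)
    have h2 := abs_le.mp (hclose ξ η hlt)
    have h3 : fP ξ (yP η) ≤ 5 / 8 := by linarith [h2.1]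
    rw [norm_sub_rev]
    refine norm_sub_eq_two (norm_clampF_le _ _ _) (norm_clampF_le _ _ _) (yP η) ?_ ?_
    · exact clampF_eq_one (by rw [hf1]; norm_num)
    · exact clampF_eq_neg_one (by linarith)
  | false =>
    refine ⟨fun ξ => clampF 4 (-1) (fP ξ), fun ξ => norm_clampF_le _ _ _, ?_⟩
    intro ξ hξ η hη hlt
    have h1 : ¬ fP ξ (xP η) ≤ 1 / 2 := of_decide_eq_false (hpair ξ η hξ hη hlt)
    push_neg at h1
    refine norm_sub_eq_two (norm_clampF_le _ _ _) (norm_clampF_le _ _ _) (xP η) ?_ ?_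
    · exact clampF_eq_one (by linarith)
    · exact clampF_eq_neg_one (by rw [hf0]; norm_num)
end

section
/- Let κ be an infinite cardinal and let K be an infinite compact Hausdorff space with w(K) ≥ (2^{<κ})⁺, the cardinal successor of 2^{<κ}. Then the closed unit ball of C(K) contains a 2-equilateral set of cardinality κ. -/
open Cardinal

lemma weight_le_of_dense {X : Type u} [TopologicalSpace X] [T3Space X]
    {S : Set X} (hS : Dense S) : weight X ≤ max (2 ^ #S) ℵ₀ := by
  set B : Set (Set X) := Set.range (fun A : Set S => interior (closure ((↑) '' A))) with hBdef
  have hB : TopologicalSpace.IsTopologicalBasis B := by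
    apply TopologicalSpace.isTopologicalBasis_of_isOpen_of_nhds
    · rintro _ ⟨A, rfl⟩; exact isOpen_interior
    · intro x u hxu hu
      obtain ⟨t, ht, htc, hts⟩ := exists_mem_nhds_isClosed_subset (hu.mem_nhds hxu)
      have hxW : x ∈ interior t := mem_interior_iff_mem_nhds.2 ht
      set A : Set S := ((↑) : S → X) ⁻¹' interior t with hA
      have h1 : ((↑) : S → X) '' A = interior t ∩ S := by
        ext y
        constructor
        · rintro ⟨z, hz, rfl⟩; exact ⟨hz, z.2⟩
        · rintro ⟨hy', hy⟩; exact ⟨⟨y, hy⟩, hy', rfl⟩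
      have h2 : interior t ⊆ closure (interior t ∩ S) :=
        hS.open_subset_closure_inter isOpen_interior
      refine ⟨interior (closure ((↑) '' A)), ⟨A, rfl⟩, ?_, ?_⟩
      · rw [h1]
        exact interior_maximal h2 isOpen_interior hxW
      · refine interior_subset.trans ?_
        rw [h1]
        calc closure (interior t ∩ S) ⊆ closure t :=
              closure_mono ((Set.inter_subset_left).trans interior_subset)
          _ = t := htc.closure_eq
          _ ⊆ u := hts
  have h1 : weight X ≤ max #B ℵ₀ := ciInf_le (OrderBot.bddBelow _) (⟨B, hB⟩ : {B : Set (Set X) // TopologicalSpace.IsTopologicalBasis B})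
  refine h1.trans (max_le_max ?_ le_rfl)
  calc #B ≤ #(Set S) := mk_range_le
    _ = 2 ^ #S := mk_set

/-- If `w(K) ≥ (2^{<κ})⁺` for an infinite cardinal `κ`, then the closed unit ball of `C(K)`
contains a `2`-equilateral set of cardinality `κ`. -/
theorem statement9 (κ : Cardinal.{u}) (hκ : ℵ₀ ≤ κ)
    (K : Type u) [TopologicalSpace K] [CompactSpace K] [T2Space K] [Infinite K]
    (hw : Order.succ (2 ^< κ) ≤ weight K) :
    ∃ A : Set C(K, ℝ), A ⊆ Metric.closedBall 0 1 ∧ #A = κ ∧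
      ∀ f ∈ A, ∀ g ∈ A, f ≠ g → ‖f - g‖ = 2 := by
  -- step 1: sets of size < κ are not dense
  have hnd : ∀ S : Set K, #S < κ → ¬ Dense S := by
    intro S hSκ hdense
    have hSinf : ℵ₀ ≤ #S := by
      by_contra h
      push_neg at h
      have hfin : S.Finite := Cardinal.lt_aleph0_iff_set_finite.1 h
      have : S = Set.univ := by
        have := hdense.closure_eq
        rwa [hfin.isClosed.closure_eq] at this
      exact Set.infinite_univ (this ▸ hfin)
    have hW : weight K ≤ 2 ^ #S := by
      have := weight_le_of_dense hdense
      have hmax : max (2 ^ #S) ℵ₀ = 2 ^ #S :=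
        max_eq_left (hSinf.trans (Cardinal.cantor _).le)
      rwa [hmax] at this
    have h2 : (2 : Cardinal) ^ #S ≤ 2 ^< κ := Cardinal.le_powerlt 2 hSκ
    have h3 : 2 ^< κ < weight K := (Order.lt_succ _).trans_le hw
    exact absurd (hW.trans h2) (not_le.2 h3)
  -- step 2: transfinite choice of points
  have hex : ∀ (i : κ.ord.ToType) (rec : ∀ j, j < i → K),
      ∃ p : K, p ∉ closure (Set.range fun j : Set.Iio i => rec j.1 j.2) := by
    intro i rec
    have h1 : #(Set.range fun j : Set.Iio i => rec j.1 j.2) < κ :=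
      lt_of_le_of_lt mk_range_le (Cardinal.mk_Iio_ord_toType i)
    have h2 := hnd _ h1
    rw [Dense] at h2
    push_neg at h2
    exact h2
  set x : κ.ord.ToType → K :=
    wellFounded_lt.fix (fun i rec => Classical.choose (hex i rec)) with hxdef
  have hfix : ∀ i, x i = Classical.choose (hex i (fun j _ => x j)) := by
    intro i
    rw [hxdef]
    exact wellFounded_lt.fix_eq _ i
  have hx : ∀ i, x i ∉ closure (x '' Set.Iio i) := by
    intro i
    have h1 := Classical.choose_spec (hex i (fun j _ => x j))
    rw [← hfix i] at h1
    have h2 : (Set.range fun j : Set.Iio i => x j.1) = x '' Set.Iio i := by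
      rw [Set.image_eq_range]
    rwa [h2] at h1
  -- step 3: Urysohn functions
  have hfun : ∀ i, ∃ f : C(K, ℝ), (∀ y ∈ closure (x '' Set.Iio i), f y = -1) ∧
      f (x i) = 1 ∧ ∀ y, f y ∈ Set.Icc (-1 : ℝ) 1 := by
    intro i
    obtain ⟨g, hg0, hg1, hg01⟩ := exists_continuous_zero_one_of_isClosed
      isClosed_closure (isClosed_singleton (x := x i))
      (Set.disjoint_singleton_right.mpr (hx i))
    refine ⟨(2 : ℝ) • g - ContinuousMap.const K 1, ?_, ?_, ?_⟩
    · intro y hy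
      have := hg0 hy
      simp only [ContinuousMap.sub_apply, ContinuousMap.smul_apply,
        ContinuousMap.const_apply, Pi.zero_apply, smul_eq_mul] at this ⊢
      rw [show g y = 0 from this]
      ring
    · have := hg1 (Set.mem_singleton _)
      simp only [ContinuousMap.sub_apply, ContinuousMap.smul_apply,
        ContinuousMap.const_apply, Pi.one_apply, smul_eq_mul] at this ⊢
      rw [show g (x i) = 1 from this]
      ring
    · intro y
      have := hg01 y
      simp only [ContinuousMap.sub_apply, ContinuousMap.smul_apply,
        ContinuousMap.const_apply, Set.mem_Icc, smul_eq_mul] at this ⊢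
      constructor <;> linarith [this.1, this.2]
  choose f hfm1 hf1 hficc using hfun
  have hnorm : ∀ i, ‖f i‖ ≤ 1 := by
    intro i
    rw [ContinuousMap.norm_le _ zero_le_one]
    intro y
    have := hficc i y
    rw [Real.norm_eq_abs, abs_le]
    exact ⟨this.1, this.2⟩
  have hkey : ∀ j i, j < i → f i (x j) = -1 := by
    intro j i hji
    exact hfm1 i (x j) (subset_closure ⟨j, hji, rfl⟩)
  have hdiff : ∀ i j, j < i → ‖f i - f j‖ = 2 := by
    intro i j hji
    have hlow : (2 : ℝ) ≤ ‖f i - f j‖ := by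
      have h1 := ContinuousMap.norm_coe_le_norm (f i - f j) (x j)
      have h2 : (f i - f j) (x j) = -2 := by
        simp [ContinuousMap.sub_apply, hkey j i hji, hf1 j]
        ring
      rw [h2] at h1
      simpa using h1
    have hhigh : ‖f i - f j‖ ≤ 2 := by
      calc ‖f i - f j‖ ≤ ‖f i‖ + ‖f j‖ := norm_sub_le _ _
        _ ≤ 1 + 1 := add_le_add (hnorm i) (hnorm j)
        _ = 2 := by norm_num
    linarith
  have hinj : Function.Injective f := by
    intro a b hab
    by_contra hne
    rcases lt_or_gt_of_ne hne with h | h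
    · have := hdiff b a h
      rw [hab] at this
      simp at this
    · have := hdiff a b h
      rw [hab] at this
      simp at this
  refine ⟨Set.range f, ?_, ?_, ?_⟩
  · rintro _ ⟨i, rfl⟩
    rw [Metric.mem_closedBall, dist_zero_right]
    exact hnorm i
  · rw [Cardinal.mk_range_eq _ hinj, Cardinal.mk_ord_toType]
  · rintro _ ⟨i, rfl⟩ _ ⟨j, rfl⟩ hne
    rcases lt_or_gt_of_ne (fun h : i = j => hne (by rw [h])) with h | h
    · rw [← norm_neg]; simpa [neg_sub] using hdiff j i h
    · exact hdiff i j h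
end

section
/- Let K be an infinite compact Hausdorff space and κ an infinite cardinal such that there exists a family {x_α : α < κ} of points of K which is left-separated or right-separated. Then the closed unit ball of C(K) contains a 2-equilateral set of cardinality κ. -/
open Cardinal

/-- A family of points indexed by a linearly ordered type is left-separated if no point lies in
the closure of the set of points with smaller index. -/
def LeftSeparated {X : Type u} [TopologicalSpace X] {ι : Type v} [LT ι] (x : ι → X) : Prop :=
  ∀ a : ι, x a ∉ closure (x '' {b | b < a})

/-- A family of points indexed by a linearly ordered type is right-separated if no point lies in
the closure of the set of points with larger index. -/
def RightSeparated {X : Type u} [TopologicalSpace X] {ι : Type v} [LT ι] (x : ι → X) : Prop :=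
  ∀ a : ι, x a ∉ closure (x '' {b | a < b})

lemma aux_equilateral {K : Type u} [TopologicalSpace K] [CompactSpace K] [T2Space K]
    {ι : Type v} (x : ι → K) (S : ι → Set ι)
    (hsep : ∀ a, x a ∉ closure (x '' S a))
    (hcomp : ∀ a b : ι, a ≠ b → a ∈ S b ∨ b ∈ S a) :
    ∃ f : ι → C(K, ℝ), (∀ a, ‖f a‖ ≤ 1) ∧
      ∀ a b, a ≠ b → ‖f a - f b‖ = 2 := by
  have key : ∀ a : ι, ∃ g : C(K, ℝ), g (x a) = 1 ∧ (∀ b ∈ S a, g (x b) = -1) ∧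
      ∀ y, g y ∈ Set.Icc (-1 : ℝ) 1 := by
    intro a
    obtain ⟨g, hg0, hg1, hg01⟩ := exists_continuous_zero_one_of_isClosed
      (isClosed_closure (s := x '' S a)) (isClosed_singleton (x := x a))
      (Set.disjoint_left.mpr fun y hy hy' => hsep a (hy' ▸ hy))
    refine ⟨(2 : ℝ) • g - 1, ?_, ?_, ?_⟩
    · simp [hg1 rfl]; norm_num
    · intro b hb
      have : g (x b) = 0 := hg0 (subset_closure (Set.mem_image_of_mem x hb))
      simp [this]
    · intro y
      have := hg01 y
      simp only [ContinuousMap.sub_apply, ContinuousMap.smul_apply, ContinuousMap.one_apply,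
        smul_eq_mul, Set.mem_Icc] at this ⊢
      constructor <;> linarith [this.1, this.2]
  choose f hf1 hfS hf01 using key
  refine ⟨f, ?_, ?_⟩
  · intro a
    refine (ContinuousMap.norm_le _ (by norm_num)).mpr fun y => ?_
    have := hf01 a y
    rw [Real.norm_eq_abs, abs_le]
    exact ⟨this.1, this.2⟩
  · intro a b hab
    have hle : ‖f a - f b‖ ≤ 2 := by
      calc ‖f a - f b‖ ≤ ‖f a‖ + ‖f b‖ := norm_sub_le _ _
      _ ≤ 2 := by
        have h1 := (ContinuousMap.norm_le (f a) (by norm_num : (0:ℝ) ≤ 1)).mpr fun y => by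
          have := hf01 a y; rw [Real.norm_eq_abs, abs_le]; exact ⟨this.1, this.2⟩
        have h2 := (ContinuousMap.norm_le (f b) (by norm_num : (0:ℝ) ≤ 1)).mpr fun y => by
          have := hf01 b y; rw [Real.norm_eq_abs, abs_le]; exact ⟨this.1, this.2⟩
        linarith
    have hge : (2 : ℝ) ≤ ‖f a - f b‖ := by
      rcases hcomp a b hab with hmem | hmem
      · have : ‖(f a - f b) (x a)‖ ≤ ‖f a - f b‖ := ContinuousMap.norm_coe_le_norm _ _
        have hval : (f a - f b) (x a) = 2 := by
          simp [hf1 a, hfS b a hmem]; ring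
        rw [hval] at this
        simpa using this
      · have : ‖(f a - f b) (x b)‖ ≤ ‖f a - f b‖ := ContinuousMap.norm_coe_le_norm _ _
        have hval : (f a - f b) (x b) = -2 := by
          simp [hf1 b, hfS a b hmem]; ring
        rw [hval] at this
        simp only [Real.norm_eq_abs] at this
        rw [abs_of_nonpos (by norm_num)] at this
        linarith
    linarith

/-- If `K` admits a left-separated or a right-separated family of points indexed by the ordinals
below `κ`, then the closed unit ball of `C(K)` contains a `2`-equilateral set of
cardinality `κ`. -/
theorem statement11 (K : Type u) [TopologicalSpace K] [CompactSpace K] [T2Space K] [Infinite K]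
    (κ : Cardinal.{u}) (hκ : ℵ₀ ≤ κ)
    (h : ∃ x : κ.ord.ToType → K, LeftSeparated x ∨ RightSeparated x) :
    ∃ A : Set C(K, ℝ), A ⊆ Metric.closedBall 0 1 ∧ #A = κ ∧
      ∀ f ∈ A, ∀ g ∈ A, f ≠ g → ‖f - g‖ = 2 := by
  obtain ⟨x, hx⟩ := h
  have main : ∃ f : κ.ord.ToType → C(K, ℝ), (∀ a, ‖f a‖ ≤ 1) ∧
      ∀ a b, a ≠ b → ‖f a - f b‖ = 2 := by
    rcases hx with hL | hR
    · exact aux_equilateral x (fun a => {b | b < a}) hL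
        (fun a b hab => (hab.lt_or_gt).imp id id)
    · exact aux_equilateral x (fun a => {b | a < b}) hR
        (fun a b hab => (hab.lt_or_gt).symm.imp id id)
  obtain ⟨f, hnorm, heq⟩ := main
  have hinj : Function.Injective f := by
    intro a b hab
    by_contra hne
    have := heq a b hne
    rw [hab, sub_self, norm_zero] at this
    norm_num at this
  refine ⟨Set.range f, ?_, ?_, ?_⟩
  · rintro _ ⟨a, rfl⟩
    simpa [Metric.mem_closedBall, dist_eq_norm] using hnorm a
  · rw [Cardinal.mk_range_eq _ hinj, Cardinal.mk_ord_toType]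
  · rintro _ ⟨a, rfl⟩ _ ⟨b, rfl⟩ hfg
    exact heq a b (fun hab => hfg (hab ▸ rfl))
end

section
/- Let K be a compact Hausdorff space and κ an infinite cardinal. If there exists a closed subset L ⊆ K such that the pseudo-character ψ(L, K) is at least κ (i.e., L is not the intersection of fewer than κ open subsets of K), then there exists a right-separated family {x_α : α < κ} in K of cardinality κ. -/
open Cardinal

/-- If a compact Hausdorff space `K` has a closed subset `L` with pseudo-character at least
`κ` (that is, `L` is not the intersection of fewer than `κ` open subsets of `K`), then
`K` contains a right-separated family indexed by the ordinals below `κ`. -/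
theorem statement13 (K : Type u) [TopologicalSpace K] [CompactSpace K] [T2Space K]
    (κ : Cardinal.{u}) (hκ : ℵ₀ ≤ κ) (L : Set K) (hL : IsClosed L)
    (hpsi : ∀ 𝒰 : Set (Set K), (∀ U ∈ 𝒰, IsOpen U) → ⋂₀ 𝒰 = L → κ ≤ #𝒰) :
    ∃ x : κ.ord.ToType → K, RightSeparated x := by
  classical
  set ι := κ.ord.ToType with hι
  -- separating a point from the closed set `L`
  have hsep : ∀ x : K, x ∉ L → ∃ U : Set K, IsOpen U ∧ L ⊆ U ∧ x ∉ closure U := by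
    intro x hx
    obtain ⟨V, U, hV, hU, hxV, hLU, hdisj⟩ :=
      SeparatedNhds.of_isCompact_isCompact isCompact_singleton hL.isCompact
        (Set.disjoint_singleton_left.mpr hx)
    refine ⟨U, hU, hLU, fun h => ?_⟩
    exact Set.disjoint_left.mp (hdisj.closure_right hV) (hxV rfl) h
  -- the type of "approved" pairs (point, open superset of L whose closure avoids the point)
  let C : Type u := {p : K × Set K // IsOpen p.2 ∧ L ⊆ p.2 ∧ p.1 ∉ closure p.2}
  have hex : ∀ (a : ι) (rec : ∀ b : ι, b < a → C),
      ∃ p : C, p.1.1 ∈ ⋂ b, ⋂ _ : b < a, (rec b ‹_›).1.2 := by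
    intro a rec
    set S := ⋂ b, ⋂ _ : b < a, (rec b ‹_›).1.2 with hS
    have hLS : L ⊆ S := Set.subset_iInter fun b => Set.subset_iInter fun h => (rec b h).2.2.1
    have hxe : ∃ x, x ∈ S ∧ x ∉ L := by
      by_contra hcon
      push_neg at hcon
      have hSL : S = L := le_antisymm hcon hLS
      set 𝒰 : Set (Set K) := Set.range (fun b : {b : ι // b < a} => (rec b.1 b.2).1.2) with h𝒰
      have h1 : ∀ U ∈ 𝒰, IsOpen U := by
        rintro U ⟨b, rfl⟩
        exact (rec b.1 b.2).2.1
      have h2 : ⋂₀ 𝒰 = L := by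
        rw [← hSL, hS, h𝒰, Set.sInter_range, Set.iInter_subtype]
      have hcard : #𝒰 < κ := by
        refine lt_of_le_of_lt Cardinal.mk_range_le ?_
        exact mk_Iio_ord_toType a
      exact absurd (hpsi 𝒰 h1 h2) (not_le.mpr hcard)
    obtain ⟨x, hxS, hxL⟩ := hxe
    obtain ⟨U, hU, hLU, hxU⟩ := hsep x hxL
    exact ⟨⟨(x, U), hU, hLU, hxU⟩, hxS⟩
  -- the transfinite construction
  let F : ι → C := WellFoundedLT.fix (fun a rec => (hex a rec).choose)
  have hF : ∀ a b : ι, b < a → (F a).1.1 ∈ (F b).1.2 := by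
    intro a b hba
    have h1 : F a = (hex a (fun b _ => F b)).choose := WellFoundedLT.fix_eq _ a
    have h2 := (hex a (fun b _ => F b)).choose_spec
    rw [← h1] at h2
    exact Set.mem_iInter.mp (Set.mem_iInter.mp h2 b) hba
  refine ⟨fun a => (F a).1.1, fun a => ?_⟩
  have hsub : (fun a => (F a).1.1) '' {b | a < b} ⊆ (F a).1.2 := by
    rintro _ ⟨b, hb, rfl⟩
    exact hF b a hb
  intro hmem
  exact (F a).2.2.2 (closure_mono hsub hmem)
end

section
/- Let L be an infinite compact Hausdorff space and let K = L × L with the product topology. Then the closed unit ball of C(K) contains a 2-equilateral set of cardinality w(K). -/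
open Cardinal

open Set TopologicalSpace

set_option linter.unusedSectionVars false

namespace Aux15

universe u
variable {L : Type u} [TopologicalSpace L] [CompactSpace L] [T2Space L]

def GoodPair (p : Set L × Set L) : Prop :=
  IsOpen p.1 ∧ IsOpen p.2 ∧ Disjoint (closure p.1) (closure p.2)

lemma GoodPair.disj {p : Set L × Set L} (hp : GoodPair p) : Disjoint p.1 p.2 :=
  hp.2.2.mono subset_closure subset_closure

lemma exists_goodPair {x y : L} (h : x ≠ y) :
    ∃ p : Set L × Set L, GoodPair p ∧ x ∈ p.1 ∧ y ∈ p.2 := by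
  obtain ⟨U, V, hU, hV, hx, hy, hUV⟩ := t2_separation h
  obtain ⟨tU, htU, hcU, hsU⟩ := exists_mem_nhds_isClosed_subset (hU.mem_nhds hx)
  obtain ⟨tV, htV, hcV, hsV⟩ := exists_mem_nhds_isClosed_subset (hV.mem_nhds hy)
  refine ⟨(interior tU, interior tV), ⟨isOpen_interior, isOpen_interior, ?_⟩,
    mem_interior_iff_mem_nhds.mpr htU, mem_interior_iff_mem_nhds.mpr htV⟩
  have h1 : closure (interior tU) ⊆ U := (closure_minimal interior_subset hcU).trans hsU
  have h2 : closure (interior tV) ⊆ V := (closure_minimal interior_subset hcV).trans hsV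
  exact hUV.mono h1 h2

lemma weight_le_of_cover (P : Set (Set L × Set L))
    (hP : ∀ p ∈ P, GoodPair p)
    (hsep : ∀ x y : L, x ≠ y → ∃ p ∈ P, x ∈ p.1 ∧ y ∈ p.2) :
    weight (L × L) ≤ max #P ℵ₀ := by
  classical
  have hc0 : ℵ₀ ≤ max #P ℵ₀ := le_max_right _ _
  set base : Finset ↥P → Set L := fun G => ⋂ p ∈ G, (p : Set L × Set L).1 with hbase
  have hBL : IsTopologicalBasis (Set.range base) := by
    apply isTopologicalBasis_of_isOpen_of_nhds
    · rintro u ⟨G, rfl⟩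
      exact isOpen_biInter_finset (fun p _ => (hP p p.2).1)
    · intro a O haO hO
      have hC : IsCompact Oᶜ := hO.isClosed_compl.isCompact
      have hcov : Oᶜ ⊆ ⋃ i : {q : Set L × Set L // q ∈ P ∧ a ∈ q.1}, i.1.2 := by
        intro y hy
        have hxy : a ≠ y := fun h => hy (h ▸ haO)
        obtain ⟨p, hp, hap, hyp⟩ := hsep a y hxy
        exact mem_iUnion.mpr ⟨⟨p, hp, hap⟩, hyp⟩
      obtain ⟨tF, htF⟩ := hC.elim_finite_subcover (fun i : {q : Set L × Set L // q ∈ P ∧ a ∈ q.1} => i.1.2)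
        (fun i => (hP i.1 i.2.1).2.1) hcov
      refine ⟨base (tF.image fun i => (⟨i.1, i.2.1⟩ : ↥P)), ⟨_, rfl⟩, ?_, ?_⟩
      · rw [hbase]
        simp only [Set.mem_iInter]
        rintro p hp
        rw [Finset.mem_image] at hp
        obtain ⟨i, _, rfl⟩ := hp
        exact i.2.2
      · intro w hw
        by_contra hwO
        obtain ⟨i, hi, hwi⟩ := mem_iUnion₂.mp (htF hwO)
        have hw1 : w ∈ (i : {q : Set L × Set L // q ∈ P ∧ a ∈ q.1}).1.1 := by
          rw [hbase] at hw
          simp only [Set.mem_iInter] at hw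
          exact hw ⟨i.1, i.2.1⟩ (Finset.mem_image_of_mem _ hi)
        exact Set.disjoint_left.mp (hP i.1 i.2.1).disj hw1 hwi
  have hBLL : IsTopologicalBasis
      (image2 (· ×ˢ ·) (Set.range base) (Set.range base)) := hBL.prod hBL
  have hw : weight (L × L) ≤
      max #(image2 (· ×ˢ ·) (Set.range base) (Set.range base) : Set (Set (L × L))) ℵ₀ := by
    unfold weight
    exact ciInf_le' (fun B : {B : Set (Set (L × L)) // IsTopologicalBasis B} => max #B.1 ℵ₀)
      ⟨_, hBLL⟩
  refine hw.trans (max_le ?_ hc0)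
  have h1 : #(Finset ↥P) ≤ max #P ℵ₀ := by
    rcases finite_or_infinite ↥P with h | h
    · haveI := Fintype.ofFinite ↥P
      exact (lt_aleph0_of_finite _).le.trans hc0
    · rw [mk_finset_of_infinite]; exact le_max_left _ _
  have h2 : #(Set.range base) ≤ max #P ℵ₀ := mk_range_le.trans h1
  calc #(image2 (· ×ˢ ·) (Set.range base) (Set.range base) : Set (Set (L × L)))
      = #(Function.uncurry (· ×ˢ ·) '' ((Set.range base) ×ˢ (Set.range base))) := by
        rw [Set.image_uncurry_prod]
    _ ≤ #((Set.range base) ×ˢ (Set.range base) : Set (Set L × Set L)) := mk_image_le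
    _ = #(Set.range base) * #(Set.range base) := by
        rw [mk_congr (Equiv.Set.prod _ _)]
        simp [mk_prod]
    _ ≤ max #P ℵ₀ * max #P ℵ₀ := mul_le_mul' h2 h2
    _ = max #P ℵ₀ := mul_eq_self hc0

lemma exists_fun {z : L × L} {p : Set L × Set L} (hp : GoodPair p) (hz : z ∈ p.1 ×ˢ p.2) :
    ∃ F : C(L × L, ℝ), ‖F‖ ≤ 1 ∧ F z = 1 ∧ ∀ w, w ∉ p.1 ×ˢ p.2 → F w = -1 := by
  have hs : IsClosed ((p.1 ×ˢ p.2)ᶜ) := (hp.1.prod hp.2.1).isClosed_compl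
  have hd : Disjoint ((p.1 ×ˢ p.2)ᶜ) ({z} : Set (L × L)) := by
    simp [Set.disjoint_singleton_right, hz]
  obtain ⟨f, hf0, hf1, hficc⟩ := exists_continuous_zero_one_of_isClosed hs isClosed_singleton hd
  refine ⟨(2 : ℝ) • f - 1, ?_, ?_, ?_⟩
  · rw [ContinuousMap.norm_le _ zero_le_one]
    intro x
    have h := hficc x
    simp only [ContinuousMap.sub_apply, ContinuousMap.smul_apply, ContinuousMap.one_apply,
      smul_eq_mul, Real.norm_eq_abs]
    rw [abs_le]
    constructor <;> [linarith [h.1]; linarith [h.2]]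
  · have h1 : f z = 1 := hf1 rfl
    norm_num [ContinuousMap.sub_apply, h1]
  · intro w hw
    have h0 : f w = 0 := hf0 hw
    norm_num [ContinuousMap.sub_apply, h0]

end Aux15

open Aux15

/-- For `K = L × L` with `L` an infinite compact Hausdorff space, the closed unit ball of
`C(K)` contains a `2`-equilateral set of cardinality `w(K)`. -/
theorem statement15 (L : Type u) [TopologicalSpace L] [CompactSpace L] [T2Space L] [Infinite L] :
    ∃ A : Set C(L × L, ℝ), A ⊆ Metric.closedBall 0 1 ∧ #A = weight (L × L) ∧
      ∀ f ∈ A, ∀ g ∈ A, f ≠ g → ‖f - g‖ = 2 := by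
  classical
  set FreeSets : Set (Set ((L × L) × (Set L × Set L))) :=
    {T | (∀ m ∈ T, GoodPair m.2 ∧ m.1 ∈ m.2.1 ×ˢ m.2.2) ∧
         ∀ m ∈ T, ∀ m' ∈ T, m ≠ m' → m.1 ∉ m'.2.1 ×ˢ m'.2.2 ∨ m'.1 ∉ m.2.1 ×ˢ m.2.2} with hFS
  have hchain : ∀ c ⊆ FreeSets, IsChain (· ⊆ ·) c → ∃ ub ∈ FreeSets, ∀ s ∈ c, s ⊆ ub := by
    intro c hc hch
    refine ⟨⋃₀ c, ⟨?_, ?_⟩, fun s hs => subset_sUnion_of_mem hs⟩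
    · rintro m ⟨t, ht, hmt⟩
      exact (hc ht).1 m hmt
    · rintro m ⟨t, ht, hmt⟩ m' ⟨t', ht', hmt'⟩ hne
      rcases IsChain.total hch ht ht' with h | h
      · exact (hc ht').2 m (h hmt) m' hmt' hne
      · exact (hc ht).2 m hmt m' (h hmt') hne
  obtain ⟨M, hMmax⟩ := zorn_subset FreeSets hchain
  have hMfree := hMmax.1
  set PM : Set (Set L × Set L) := Prod.snd '' M with hPM
  have hPMgood : ∀ p ∈ PM, GoodPair p := by
    rintro p ⟨m, hm, rfl⟩
    exact (hMfree.1 m hm).1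
  have hPMsep : ∀ x y : L, x ≠ y → ∃ p ∈ PM, x ∈ p.1 ∧ y ∈ p.2 := by
    intro x y hxy
    by_contra hno
    push_neg at hno
    obtain ⟨p, hp, hxp, hyp⟩ := exists_goodPair hxy
    have hnotin : ∀ m ∈ M, ((x, y) : L × L) ∉ m.2.1 ×ˢ m.2.2 := by
      intro m hm hmem
      rw [Set.mem_prod] at hmem
      exact hno m.2 ⟨m, hm, rfl⟩ hmem.1 hmem.2
    have hfree : insert (((x, y) : L × L), p) M ∈ FreeSets := by
      constructor
      · rintro m (rfl | hm)
        · exact ⟨hp, Set.mem_prod.mpr ⟨hxp, hyp⟩⟩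
        · exact hMfree.1 m hm
      · rintro m (rfl | hm) m' (rfl | hm') hne
        · exact absurd rfl hne
        · exact Or.inl (hnotin m' hm')
        · exact Or.inr (hnotin m hm)
        · exact hMfree.2 m hm m' hm' hne
    have hsub := hMmax.2 hfree (subset_insert _ _)
    have hmem : (((x, y) : L × L), p) ∈ M := hsub (mem_insert _ _)
    exact hnotin _ hmem (Set.mem_prod.mpr ⟨hxp, hyp⟩)
  have hMinf : M.Infinite := by
    by_contra h
    rw [Set.not_infinite] at h
    have hPMfin : PM.Finite := h.image _
    set f : L → Set (Set L × Set L) := fun x => {p ∈ PM | x ∈ p.1} with hf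
    have hinj : Function.Injective f := by
      intro x y hxy'
      by_contra hne
      obtain ⟨p, hp, hxp, hyp⟩ := hPMsep x y hne
      have hmember : p ∈ f x := ⟨hp, hxp⟩
      rw [hxy'] at hmember
      exact Set.disjoint_left.mp (hPMgood p hp).disj hmember.2 hyp
    have hrange : (Set.range f).Finite := by
      refine (hPMfin.finite_subsets).subset ?_
      rintro _ ⟨x, rfl⟩
      exact fun p hp => hp.1
    haveI := hrange.to_subtype
    haveI : Finite L :=
      Finite.of_injective (fun x => (⟨f x, mem_range_self x⟩ : ↥(Set.range f)))
        (fun a b hab => hinj (congrArg Subtype.val hab))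
    exact not_finite L
  have hMcard : weight (L × L) ≤ #M := by
    have h1 := weight_le_of_cover PM hPMgood hPMsep
    have h3 : ℵ₀ ≤ #M := aleph0_le_mk_iff.mpr (Set.infinite_coe_iff.mpr hMinf)
    calc weight (L × L) ≤ max #PM ℵ₀ := h1
      _ ≤ max #M ℵ₀ := max_le_max mk_image_le le_rfl
      _ = #M := max_eq_left h3
  obtain ⟨sM, hsM⟩ := le_mk_iff_exists_set.mp hMcard
  have hprop : ∀ m : ↥M, GoodPair m.1.2 ∧ m.1.1 ∈ m.1.2.1 ×ˢ m.1.2.2 :=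
    fun m => hMfree.1 m.1 m.2
  choose F hF1 hF2 hF3 using fun m : ↥M => exists_fun (hprop m).1 (hprop m).2
  have hkey : ∀ m m' : ↥M, m ≠ m' →
      (F m m.1.1 = 1 ∧ F m' m.1.1 = -1) ∨ (F m' m'.1.1 = 1 ∧ F m m'.1.1 = -1) := by
    intro m m' hne
    have hne' : m.1 ≠ m'.1 := fun h => hne (Subtype.coe_injective h)
    rcases hMfree.2 m.1 m.2 m'.1 m'.2 hne' with h | h
    · exact Or.inl ⟨hF2 m, hF3 m' _ h⟩
    · exact Or.inr ⟨hF2 m', hF3 m _ h⟩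
  have hFinj : Function.Injective F := by
    intro m m' h
    by_contra hne
    rcases hkey m m' hne with ⟨h1, h2⟩ | ⟨h1, h2⟩ <;> rw [h] at * <;>
      rw [h1] at h2 <;> norm_num at h2
  have hdist : ∀ m m' : ↥M, m ≠ m' → ‖F m - F m'‖ = 2 := by
    intro m m' hne
    have hub : ‖F m - F m'‖ ≤ 2 := (norm_sub_le _ _).trans (by linarith [hF1 m, hF1 m'])
    refine le_antisymm hub ?_
    rcases hkey m m' hne with ⟨h1, h2⟩ | ⟨h1, h2⟩
    · have hlb := (F m - F m').norm_coe_le_norm m.1.1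
      rw [ContinuousMap.sub_apply, h1, h2] at hlb
      norm_num at hlb
      linarith
    · have hlb := (F m - F m').norm_coe_le_norm m'.1.1
      rw [ContinuousMap.sub_apply, h1, h2] at hlb
      norm_num at hlb
      linarith
  refine ⟨F '' sM, ?_, ?_, ?_⟩
  · rintro g ⟨m, hm, rfl⟩
    exact mem_closedBall_zero_iff.mpr (hF1 m)
  · rw [Cardinal.mk_image_eq hFinj, hsM]
  · rintro g ⟨m, hm, rfl⟩ g' ⟨m', hm', rfl⟩ hgg'
    exact hdist m m' (fun h => hgg' (by rw [h]))
end

section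
/- Let K be an infinite compact Hausdorff space. Then the closed unit ball of C(K) contains a 1-separated set of cardinality w(K). -/
open Cardinal

open Set


/-- Split an infinite open set into a nonempty open piece and a disjoint infinite open piece. -/
lemma split_infinite_open {X : Type*} [TopologicalSpace X] [T2Space X] {s : Set X}
    (hs : s.Infinite) (hso : IsOpen s) :
    ∃ U V : Set X, IsOpen U ∧ IsOpen V ∧ U.Nonempty ∧ V.Infinite ∧ Disjoint U V ∧
      U ⊆ s ∧ V ⊆ s := by
  by_cases h : ∃ x ∈ s, IsOpen ({x} : Set X)
  · obtain ⟨x, hx, hxo⟩ := h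
    refine ⟨{x}, s \ {x}, hxo, ?_, ⟨x, rfl⟩, hs.diff (finite_singleton x), ?_, ?_, ?_⟩
    · have : s \ {x} = s ∩ {x}ᶜ := rfl
      rw [this]
      exact hso.inter isClosed_singleton.isOpen_compl
    · exact disjoint_sdiff_right
    · exact singleton_subset_iff.2 hx
    · exact diff_subset
  · push_neg at h
    -- every nonempty open subset of s is infinite
    have key : ∀ W : Set X, IsOpen W → W ⊆ s → W.Nonempty → W.Infinite := by
      intro W hWo hWs ⟨x, hxW⟩
      by_contra hfin
      rw [not_infinite] at hfin
      refine h x (hWs hxW) ?_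
      have : ({x} : Set X) = W ∩ (W \ {x})ᶜ := by
        ext z
        simp only [mem_singleton_iff, mem_inter_iff, mem_compl_iff, mem_diff, not_and, not_not]
        constructor
        · rintro rfl; exact ⟨hxW, fun _ => rfl⟩
        · rintro ⟨hzW, hz⟩; exact hz hzW
      rw [this]
      exact hWo.inter ((hfin.diff (t := {x})).isClosed.isOpen_compl)
    obtain ⟨x, hx, y, hy, hxy⟩ := hs.nontrivial
    obtain ⟨U', V', hU'o, hV'o, hxU', hyV', hUV'⟩ := t2_separation hxy
    exact ⟨U' ∩ s, V' ∩ s, hU'o.inter hso, hV'o.inter hso, ⟨x, hxU', hx⟩,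
      key _ (hV'o.inter hso) inter_subset_right ⟨y, hyV', hy⟩,
      (hUV'.mono inter_subset_left inter_subset_left), inter_subset_right, inter_subset_right⟩

lemma exists_disjoint_opens (X : Type*) [TopologicalSpace X] [T2Space X] [Infinite X] :
    ∃ U : ℕ → Set X, (∀ n, IsOpen (U n)) ∧ (∀ n, (U n).Nonempty) ∧
      Pairwise (Function.onFun Disjoint U) := by
  classical
  let T := {s : Set X // s.Infinite ∧ IsOpen s}
  have step : ∀ t : T, ∃ p : Set X × T, IsOpen p.1 ∧ p.1.Nonempty ∧
      Disjoint p.1 p.2.1 ∧ p.1 ⊆ t.1 ∧ p.2.1 ⊆ t.1 := by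
    intro t
    obtain ⟨U, V, hUo, hVo, hUne, hVinf, hUV, hUs, hVs⟩ :=
      split_infinite_open t.2.1 t.2.2
    exact ⟨(U, ⟨V, hVinf, hVo⟩), hUo, hUne, hUV, hUs, hVs⟩
  choose f hf1 hf2 hf3 hf4 hf5 using step
  let s : ℕ → T := fun n => Nat.rec ⟨univ, infinite_univ, isOpen_univ⟩ (fun _ t => (f t).2) n
  have hs_succ : ∀ n, (s (n+1)).1 ⊆ (s n).1 := fun n => hf5 (s n)
  have hs_mono : ∀ n m, n ≤ m → (s m).1 ⊆ (s n).1 := by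
    intro n m hnm
    induction m with
    | zero => simp_all
    | succ k ih =>
      rcases Nat.lt_or_ge n (k+1) with h | h
      · exact (hs_succ k).trans (ih (Nat.lt_succ_iff.mp h))
      · have : n = k + 1 := le_antisymm hnm h
        subst this; exact subset_rfl
  refine ⟨fun n => (f (s n)).1, fun n => hf1 _, fun n => hf2 _, ?_⟩
  have key : ∀ n m, n < m → Disjoint (f (s n)).1 (f (s m)).1 := by
    intro n m hnm
    have h1 : (f (s m)).1 ⊆ (s m).1 := hf4 _
    have h2 : (s m).1 ⊆ (s (n+1)).1 := hs_mono _ _ hnm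
    have h3 : (s (n+1)).1 = (f (s n)).2.1 := rfl
    exact (hf3 (s n)).mono_right (h1.trans (h2.trans (le_of_eq h3)))
  intro n m hnm
  rcases Nat.lt_or_ge n m with h | h
  · exact key n m h
  · exact (key m n (lt_of_le_of_ne h (Ne.symm hnm))).symm

lemma exists_countable_separated (K : Type*) [TopologicalSpace K] [CompactSpace K] [T2Space K]
    [Infinite K] :
    ∃ g : ℕ → C(K, ℝ), (∀ n, ‖g n‖ ≤ 1) ∧ ∀ n m, n ≠ m → 1 ≤ ‖g n - g m‖ := by
  classical
  obtain ⟨U, hUo, hUne, hUd⟩ := exists_disjoint_opens K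
  choose x hx using hUne
  have h : ∀ n, ∃ g : C(K, ℝ), EqOn g 0 (U n)ᶜ ∧ EqOn g 1 {x n} ∧ ∀ z, g z ∈ Icc (0:ℝ) 1 := by
    intro n
    exact exists_continuous_zero_one_of_isClosed (hUo n).isClosed_compl isClosed_singleton
      (by
        rw [disjoint_singleton_right]
        simp only [mem_compl_iff, not_not]
        exact hx n)
  choose g hg0 hg1 hg2 using h
  refine ⟨g, fun n => ?_, fun n m hnm => ?_⟩
  · rw [ContinuousMap.norm_le _ zero_le_one]
    intro z
    rw [Real.norm_eq_abs, abs_le]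
    exact ⟨le_trans (by norm_num) (hg2 n z).1, (hg2 n z).2⟩
  · have h1 : (g n) (x m) = 0 := hg0 n (disjoint_left.mp (hUd hnm.symm) (hx m))
    have h2 : (g m) (x m) = 1 := hg1 m rfl
    calc (1:ℝ) = ‖(g n - g m) (x m)‖ := by
          simp [h1, h2]
      _ ≤ ‖g n - g m‖ := ContinuousMap.norm_coe_le_norm _ _

lemma rat_sep {a b : ℝ} (hab : a ≠ b) :
    ∃ p q : ℚ, a ∈ Ioo (p:ℝ) q ∧ b ∉ Icc (p:ℝ) q := by
  rcases hab.lt_or_gt with h | h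
  · obtain ⟨q, hq1, hq2⟩ := exists_rat_btwn h
    obtain ⟨p, hp⟩ := exists_rat_lt a
    exact ⟨p, q, ⟨hp, hq1⟩, fun hb => absurd hb.2 (not_le.2 hq2)⟩
  · obtain ⟨p, hp1, hp2⟩ := exists_rat_btwn h
    obtain ⟨q, hq⟩ := exists_rat_gt a
    exact ⟨p, q, ⟨hp2, hq⟩, fun hb => absurd hb.1 (not_le.2 hp1)⟩


lemma weight_le_of_separating_s17 {K : Type u} [TopologicalSpace K] [CompactSpace K] [T2Space K]
    (A : Set C(K, ℝ)) (hA : A.Infinite)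
    (hsep : ∀ x y : K, x ≠ y → ∃ f ∈ A, f x ≠ f y) :
    weight K ≤ #A := by
  classical
  haveI : Infinite ↥A := hA.to_subtype
  set φ : Finset (↥A × ℚ × ℚ) → Set K :=
    fun t => ⋂ z ∈ t, ((z.1 : C(K, ℝ)) ⁻¹' Ioo (z.2.1 : ℝ) (z.2.2 : ℝ)) with hφ
  set B : Set (Set K) := range φ with hB
  have hbasis : TopologicalSpace.IsTopologicalBasis B := by
    refine TopologicalSpace.isTopologicalBasis_of_isOpen_of_nhds ?_ ?_
    · rintro u ⟨t, rfl⟩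
      exact isOpen_biInter_finset fun z _ =>
        (z.1 : C(K, ℝ)).continuous.isOpen_preimage _ isOpen_Ioo
    · intro x u hxu huo
      have hC : IsCompact uᶜ := huo.isClosed_compl.isCompact
      have hy : ∀ y : K, y ∈ uᶜ → ∃ z : ↥A × ℚ × ℚ,
          (z.1 : C(K, ℝ)) x ∈ Ioo (z.2.1 : ℝ) (z.2.2 : ℝ) ∧
          (z.1 : C(K, ℝ)) y ∉ Icc (z.2.1 : ℝ) (z.2.2 : ℝ) := by
        intro y hyu
        have hxy : x ≠ y := fun h => hyu (h ▸ hxu)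
        obtain ⟨f, hfA, hf⟩ := hsep x y hxy
        obtain ⟨p, q, h1, h2⟩ := rat_sep hf
        exact ⟨⟨⟨f, hfA⟩, p, q⟩, h1, h2⟩
      choose! z hz1 hz2 using hy
      have hcover : uᶜ ⊆ ⋃ y ∈ uᶜ, ((z y).1 : C(K, ℝ)) ⁻¹' (Icc ((z y).2.1 : ℝ) (z y).2.2)ᶜ := by
        intro y hyu
        exact mem_biUnion hyu (hz2 y hyu)
      obtain ⟨t, ht⟩ := hC.elim_finite_subcover_image
        (fun y _ => (((z y).1 : C(K, ℝ)).continuous.isOpen_preimage _ isClosed_Icc.isOpen_compl))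
        hcover
      obtain ⟨htsub, htfin, htcov⟩ := ht
      refine ⟨φ (htfin.toFinset.image z), ⟨_, rfl⟩, ?_, ?_⟩
      · simp only [hφ, mem_iInter, Finset.mem_image, Finite.mem_toFinset]
        rintro w ⟨y, hyt, rfl⟩
        exact hz1 y (htsub hyt)
      · intro w hw
        by_contra hwu
        have hwC : w ∈ uᶜ := hwu
        obtain ⟨y, hyt, hyw⟩ := mem_iUnion₂.mp (htcov hwC)
        have : w ∈ ((z y).1 : C(K, ℝ)) ⁻¹' Ioo ((z y).2.1 : ℝ) (z y).2.2 := by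
          simp only [hφ, mem_iInter] at hw
          exact hw (z y) (Finset.mem_image_of_mem z (htfin.mem_toFinset.mpr hyt))
        exact hyw ⟨le_of_lt this.1, le_of_lt this.2⟩
  have hcard : #B ≤ #A := by
    calc #B ≤ #(Finset (↥A × ℚ × ℚ)) := mk_range_le
      _ = #(↥A × ℚ × ℚ) := mk_finset_of_infinite _
      _ = #A := by
          rw [mk_prod, mk_prod]
          simp [mul_aleph0_eq (aleph0_le_mk ↥A)]
  calc weight K ≤ max #B ℵ₀ := ciInf_le' _ (⟨B, hbasis⟩ : {B : Set (Set K) // TopologicalSpace.IsTopologicalBasis B})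
    _ ≤ #A := max_le hcard (aleph0_le_mk ↥A)

/-- The closed unit ball of `C(K)` contains a `1`-separated set of cardinality `w(K)`. -/
theorem statement17 (K : Type u) [TopologicalSpace K] [CompactSpace K] [T2Space K] [Infinite K] :
    ∃ A : Set C(K, ℝ), A ⊆ Metric.closedBall 0 1 ∧ #A = weight K ∧
      ∀ f ∈ A, ∀ g ∈ A, f ≠ g → 1 ≤ ‖f - g‖ := by
  classical
  obtain ⟨g, hgnorm, hgsep⟩ := exists_countable_separated K
  have hginj : Function.Injective g := by
    intro n m h
    by_contra hnm
    have := hgsep n m hnm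
    rw [h, sub_self, norm_zero] at this
    linarith
  set B₀ : Set C(K, ℝ) := range g with hB₀
  set S : Set (Set C(K, ℝ)) :=
    {A | A ⊆ Metric.closedBall 0 1 ∧ ∀ f ∈ A, ∀ h ∈ A, f ≠ h → 1 ≤ ‖f - h‖} with hS
  have hB₀S : B₀ ∈ S := by
    constructor
    · rintro f ⟨n, rfl⟩
      rw [Metric.mem_closedBall, dist_zero_right]
      exact hgnorm n
    · rintro f ⟨n, rfl⟩ h ⟨m, rfl⟩ hfh
      exact hgsep n m (fun e => hfh (by rw [e]))
  obtain ⟨M, hB₀M, hM⟩ := zorn_subset_nonempty S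
    (fun c hcS hchain hcne => by
      refine ⟨⋃₀ c, ⟨?_, ?_⟩, fun s hs => subset_sUnion_of_mem hs⟩
      · rintro f ⟨s, hsc, hfs⟩
        exact (hcS hsc).1 hfs
      · rintro f ⟨s, hsc, hfs⟩ h ⟨t, htc, hht⟩ hfh
        rcases hchain.total hsc htc with h' | h'
        · exact (hcS htc).2 f (h' hfs) h hht hfh
        · exact (hcS hsc).2 f hfs h (h' hht) hfh) B₀ hB₀S
  have hMball : M ⊆ Metric.closedBall 0 1 := hM.prop.1
  have hMsep : ∀ f ∈ M, ∀ h ∈ M, f ≠ h → 1 ≤ ‖f - h‖ := hM.prop.2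
  have hMinf : M.Infinite := (infinite_range_of_injective hginj).mono hB₀M
  have hwM : weight K ≤ #M := by
    by_contra hcon
    by_cases hsep : ∀ x y : K, x ≠ y → ∃ f ∈ M, f x ≠ f y
    · exact hcon (weight_le_of_separating_s17 M hMinf hsep)
    · push_neg at hsep
      obtain ⟨x, y, hxy, hagree⟩ := hsep
      obtain ⟨f₀, hf0, hf1, hf01⟩ := exists_continuous_zero_one_of_isClosed
        (isClosed_singleton (x := x)) (isClosed_singleton (x := y))
        (by rwa [disjoint_singleton])
      set G : C(K, ℝ) := (2 : ℝ) • f₀ - 1 with hGdef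
      have hGx : G x = -1 := by
        have : f₀ x = 0 := hf0 rfl
        simp [hGdef, this]
      have hGy : G y = 1 := by
        have : f₀ y = 1 := hf1 rfl
        simp [hGdef, this]; norm_num
      have hGnorm : ‖G‖ ≤ 1 := by
        rw [ContinuousMap.norm_le _ zero_le_one]
        intro z
        have := hf01 z
        rw [Real.norm_eq_abs, abs_le]
        constructor <;> simp [hGdef] <;> nlinarith [this.1, this.2]
      have hGsep : ∀ f ∈ M, 1 ≤ ‖G - f‖ := by
        intro f hf
        have hfx : |f x| ≤ 1 := by
          have := hMball hf
          rw [Metric.mem_closedBall, dist_zero_right] at this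
          calc |f x| = ‖f x‖ := rfl
            _ ≤ ‖f‖ := ContinuousMap.norm_coe_le_norm _ _
            _ ≤ 1 := this
        have hfxy : f x = f y := hagree f hf
        rcases le_or_gt (f x) 0 with h | h
        · calc (1:ℝ) ≤ ‖(G - f) y‖ := by
                simp only [ContinuousMap.sub_apply, hGy, ← hfxy, Real.norm_eq_abs]
                rw [abs_le'] at hfx
                rw [abs_of_nonneg (by linarith)]
                linarith
            _ ≤ ‖G - f‖ := ContinuousMap.norm_coe_le_norm _ _
        · calc (1:ℝ) ≤ ‖(G - f) x‖ := by
                simp only [ContinuousMap.sub_apply, hGx, Real.norm_eq_abs]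
                rw [abs_le'] at hfx
                rw [abs_of_nonpos (by linarith), neg_sub]
                linarith
            _ ≤ ‖G - f‖ := ContinuousMap.norm_coe_le_norm _ _
      have hGnotM : G ∉ M := by
        intro hGM
        have := hagree G hGM
        rw [hGx, hGy] at this
        norm_num at this
      have hins : insert G M ∈ S := by
        constructor
        · rintro f hf
          rcases hf with rfl | hf
          · rw [Metric.mem_closedBall, dist_zero_right]; exact hGnorm
          · exact hMball hf
        · intro f hf h hh hfh
          rcases hf with rfl | hf <;> rcases hh with rfl | hh
          · exact absurd rfl hfh
          · exact hGsep h hh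
          · rw [norm_sub_rev]; exact hGsep f hf
          · exact hMsep f hf h hh hfh
      exact hGnotM (hM.2 hins (subset_insert G M) (mem_insert G M))
  obtain ⟨A, hAM, hAcard⟩ := le_mk_iff_exists_subset.mp hwM
  exact ⟨A, hAM.trans hMball, hAcard, fun f hf h hh => hMsep f (hAM hf) h (hAM hh)⟩
end

section
/- Let K be an infinite compact Hausdorff space, let κ be an infinite cardinal, and let L be either a closed subspace of K or a continuous image of K (i.e., there is a continuous surjection from K onto L). If the closed unit ball of C(L) contains a (1+)-separated (respectively, 2-equilateral) set of cardinality κ, then the closed unit ball of C(K) contains a (1+)-separated (respectively, 2-equilateral) set of cardinality κ. -/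
open Cardinal

/-- Key transfer lemma: a map between function spaces that maps the unit ball into the
unit ball and does not decrease distances transfers separated/equilateral sets. -/
lemma transfer18 {K : Type u} [TopologicalSpace K] [CompactSpace K] [T2Space K]
    {L : Type u} [TopologicalSpace L] [CompactSpace L] [T2Space L]
    (T : C(L, ℝ) → C(K, ℝ))
    (hT1 : ∀ f : C(L, ℝ), ‖f‖ ≤ 1 → ‖T f‖ ≤ 1)
    (hT2 : ∀ f g : C(L, ℝ), ‖f‖ ≤ 1 → ‖g‖ ≤ 1 → ‖f - g‖ ≤ ‖T f - T g‖)
    (κ : Cardinal.{u}) :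
    ((∃ A : Set C(L, ℝ), A ⊆ Metric.closedBall 0 1 ∧ #A = κ ∧
        ∀ f ∈ A, ∀ g ∈ A, f ≠ g → 1 < ‖f - g‖) →
      (∃ A : Set C(K, ℝ), A ⊆ Metric.closedBall 0 1 ∧ #A = κ ∧
        ∀ f ∈ A, ∀ g ∈ A, f ≠ g → 1 < ‖f - g‖)) ∧
    ((∃ A : Set C(L, ℝ), A ⊆ Metric.closedBall 0 1 ∧ #A = κ ∧
        ∀ f ∈ A, ∀ g ∈ A, f ≠ g → ‖f - g‖ = 2) →
      (∃ A : Set C(K, ℝ), A ⊆ Metric.closedBall 0 1 ∧ #A = κ ∧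
        ∀ f ∈ A, ∀ g ∈ A, f ≠ g → ‖f - g‖ = 2)) := by
  constructor
  · rintro ⟨A, hAball, hAcard, hAsep⟩
    have hball : ∀ f ∈ A, ‖f‖ ≤ 1 := fun f hf => by
      simpa [mem_closedBall_zero_iff] using hAball hf
    have hinj : Set.InjOn T A := by
      intro f hf g hg hfg
      by_contra hne
      have h1 := hAsep f hf g hg hne
      have h2 := hT2 f g (hball f hf) (hball g hg)
      rw [hfg] at h2
      simp at h2
      rw [h2] at h1
      norm_num at h1
    refine ⟨T '' A, ?_, ?_, ?_⟩
    · rintro _ ⟨f, hf, rfl⟩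
      simpa [mem_closedBall_zero_iff] using hT1 f (hball f hf)
    · rw [Cardinal.mk_image_eq_of_injOn _ _ hinj, hAcard]
    · rintro _ ⟨f, hf, rfl⟩ _ ⟨g, hg, rfl⟩ hne
      have hne' : f ≠ g := fun e => hne (by rw [e])
      exact lt_of_lt_of_le (hAsep f hf g hg hne')
        (hT2 f g (hball f hf) (hball g hg))
  · rintro ⟨A, hAball, hAcard, hAsep⟩
    have hball : ∀ f ∈ A, ‖f‖ ≤ 1 := fun f hf => by
      simpa [mem_closedBall_zero_iff] using hAball hf
    have hinj : Set.InjOn T A := by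
      intro f hf g hg hfg
      by_contra hne
      have h1 := hAsep f hf g hg hne
      have h2 := hT2 f g (hball f hf) (hball g hg)
      rw [hfg] at h2
      simp at h2
      rw [h2] at h1
      norm_num at h1
    refine ⟨T '' A, ?_, ?_, ?_⟩
    · rintro _ ⟨f, hf, rfl⟩
      simpa [mem_closedBall_zero_iff] using hT1 f (hball f hf)
    · rw [Cardinal.mk_image_eq_of_injOn _ _ hinj, hAcard]
    · rintro _ ⟨f, hf, rfl⟩ _ ⟨g, hg, rfl⟩ hne
      have hne' : f ≠ g := fun e => hne (by rw [e])
      have h1 := hAsep f hf g hg hne'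
      have h2 := hT2 f g (hball f hf) (hball g hg)
      rw [h1] at h2
      have h3 : ‖T f - T g‖ ≤ 2 := by
        calc ‖T f - T g‖ ≤ ‖T f‖ + ‖T g‖ := norm_sub_le _ _
          _ ≤ 2 := by linarith [hT1 f (hball f hf), hT1 g (hball g hg)]
      linarith

/-- If `L` is a closed subspace of `K` or a continuous image of `K`, then any `(1+)`-separated
(respectively `2`-equilateral) set of cardinality `κ` in the closed unit ball of `C(L)` yields
one in the closed unit ball of `C(K)`. -/
theorem statement18 (K : Type u) [TopologicalSpace K] [CompactSpace K] [T2Space K] [Infinite K]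
    (L : Type u) [TopologicalSpace L] [CompactSpace L] [T2Space L] [Infinite L]
    (κ : Cardinal.{u}) (hκ : ℵ₀ ≤ κ)
    (h : (∃ s : Set K, IsClosed s ∧ Nonempty (L ≃ₜ s)) ∨
      (∃ φ : K → L, Continuous φ ∧ Function.Surjective φ)) :
    ((∃ A : Set C(L, ℝ), A ⊆ Metric.closedBall 0 1 ∧ #A = κ ∧
        ∀ f ∈ A, ∀ g ∈ A, f ≠ g → 1 < ‖f - g‖) →
      (∃ A : Set C(K, ℝ), A ⊆ Metric.closedBall 0 1 ∧ #A = κ ∧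
        ∀ f ∈ A, ∀ g ∈ A, f ≠ g → 1 < ‖f - g‖)) ∧
    ((∃ A : Set C(L, ℝ), A ⊆ Metric.closedBall 0 1 ∧ #A = κ ∧
        ∀ f ∈ A, ∀ g ∈ A, f ≠ g → ‖f - g‖ = 2) →
      (∃ A : Set C(K, ℝ), A ⊆ Metric.closedBall 0 1 ∧ #A = κ ∧
        ∀ f ∈ A, ∀ g ∈ A, f ≠ g → ‖f - g‖ = 2)) := by
  rcases h with ⟨s, hs, ⟨e⟩⟩ | ⟨φ, hφc, hφs⟩
  · -- closed subspace case
    have : NormalSpace K := inferInstance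
    have ht : TietzeExtension.{u, 0} (Metric.closedBall (0 : ℝ) 1) :=
      Metric.instTietzeExtensionClosedBall ℝ (0 : ℝ) one_pos
    -- For f : C(L, ℝ) with ‖f‖ ≤ 1, extend f ∘ e.symm : C(s, ℝ) to K with values in the ball.
    have hext : ∀ f : C(L, ℝ), ‖f‖ ≤ 1 →
        ∃ g : C(K, ℝ), (∀ x, g x ∈ Metric.closedBall (0 : ℝ) 1) ∧
          g.restrict s = (f.comp ⟨e.symm, e.symm.continuous⟩) := by
      intro f hf
      have hmem : ∀ x : s, (f.comp ⟨e.symm, e.symm.continuous⟩) x ∈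
          Metric.closedBall (0 : ℝ) 1 := by
        intro x
        simp only [Metric.mem_closedBall, dist_zero_right]
        exact le_trans (f.norm_coe_le_norm _) hf
      exact ContinuousMap.exists_forall_mem_restrict_eq hs
        (f.comp ⟨e.symm, e.symm.continuous⟩) hmem
    classical
    let T : C(L, ℝ) → C(K, ℝ) := fun f =>
      if hf : ‖f‖ ≤ 1 then (hext f hf).choose else 0
    have hT1 : ∀ f : C(L, ℝ), ‖f‖ ≤ 1 → ‖T f‖ ≤ 1 := by
      intro f hf
      simp only [T, dif_pos hf]
      rw [ContinuousMap.norm_le _ zero_le_one]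
      intro x
      have := (hext f hf).choose_spec.1 x
      simpa [Metric.mem_closedBall, dist_zero_right] using this
    have hT2 : ∀ f g : C(L, ℝ), ‖f‖ ≤ 1 → ‖g‖ ≤ 1 → ‖f - g‖ ≤ ‖T f - T g‖ := by
      intro f g hf hg
      simp only [T, dif_pos hf, dif_pos hg]
      rw [ContinuousMap.norm_le _ (norm_nonneg _)]
      intro y
      -- y : L corresponds to e y : s
      have hF := congrFun (congrArg (fun h : C(s, ℝ) => (h : s → ℝ))
        (hext f hf).choose_spec.2) (e y)
      have hG := congrFun (congrArg (fun h : C(s, ℝ) => (h : s → ℝ))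
        (hext g hg).choose_spec.2) (e y)
      simp only [ContinuousMap.coe_restrict, ContinuousMap.comp_apply,
        ContinuousMap.coe_mk, Function.comp_apply, Homeomorph.symm_apply_apply] at hF hG
      have : ‖(f - g) y‖ = ‖((hext f hf).choose - (hext g hg).choose) ((e y : s) : K)‖ := by
        simp only [ContinuousMap.sub_apply]
        rw [← hF, ← hG]
        rfl
      rw [this]
      exact ContinuousMap.norm_coe_le_norm _ _
    exact transfer18 T hT1 hT2 κ
  · -- continuous image case
    let T : C(L, ℝ) → C(K, ℝ) := fun f => f.comp ⟨φ, hφc⟩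
    have hnorm : ∀ f : C(L, ℝ), ‖T f‖ = ‖f‖ := by
      intro f
      apply le_antisymm
      · rw [ContinuousMap.norm_le _ (norm_nonneg f)]
        intro x
        exact f.norm_coe_le_norm (φ x)
      · rw [ContinuousMap.norm_le _ (norm_nonneg (T f))]
        intro y
        obtain ⟨x, rfl⟩ := hφs y
        exact (T f).norm_coe_le_norm x
    have hT2 : ∀ f g : C(L, ℝ), ‖f‖ ≤ 1 → ‖g‖ ≤ 1 → ‖f - g‖ ≤ ‖T f - T g‖ := by
      intro f g _ _
      have : T f - T g = T (f - g) := by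
        ext x; simp [T]
      rw [this, hnorm]
    exact transfer18 T (fun f hf => by rw [hnorm]; exact hf) hT2 κ
end

section
/- Assume the Generalized Continuum Hypothesis (2^λ = λ⁺ for every infinite cardinal λ). Let K be an infinite compact Hausdorff space. If w(K) is a limit cardinal, then the closed unit ball of C(K) contains a 2-equilateral set of cardinality w(K); and if w(K) = κ⁺ for an infinite cardinal κ, then the closed unit ball of C(K) contains a 2-equilateral set of cardinality κ. -/
open Cardinal

section Aux

open Set TopologicalSpace

/-- The density character of a space, as a cardinal. -/
noncomputable def densCard (K : Type u) [TopologicalSpace K] : Cardinal.{u} :=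
  sInf {c | ∃ s : Set K, Dense s ∧ #s = c}

variable {K : Type u} [TopologicalSpace K]

lemma densCard_set_nonempty : {c | ∃ s : Set K, Dense s ∧ #s = c}.Nonempty :=
  ⟨#(univ : Set K), univ, dense_univ, rfl⟩

lemma exists_dense_densCard : ∃ s : Set K, Dense s ∧ #s = densCard K :=
  csInf_mem densCard_set_nonempty

lemma densCard_le_of_dense {s : Set K} (hs : Dense s) : densCard K ≤ #s :=
  csInf_le' ⟨s, hs, rfl⟩

lemma aleph0_le_densCard [T2Space K] [Infinite K] : ℵ₀ ≤ densCard K := by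
  by_contra h
  push_neg at h
  obtain ⟨s, hs, hsc⟩ := exists_dense_densCard (K := K)
  have hfin : s.Finite := Cardinal.lt_aleph0_iff_set_finite.1 (hsc ▸ h)
  have huniv : s = Set.univ := by
    have h2 := hs.closure_eq
    rwa [hfin.isClosed.closure_eq] at h2
  exact Set.infinite_univ (huniv ▸ hfin)

variable [CompactSpace K] [T2Space K]

/-- Any cardinal at most the density character is realized by a `2`-equilateral
set in the closed unit ball of `C(K, ℝ)`. -/
lemma equilateral_of_le_densCard [Infinite K] (lam : Cardinal.{u})
    (hlam : lam ≤ densCard K) :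
    ∃ A : Set C(K, ℝ), A ⊆ Metric.closedBall 0 1 ∧ #A = lam ∧
      ∀ f ∈ A, ∀ g ∈ A, f ≠ g → ‖f - g‖ = 2 := by
  classical
  set r : K → K → Prop := WellOrderingRel with hr
  have wf : WellFounded r := IsWellFounded.wf
  set J : Set K := {y | y ∉ closure {z | r z y}} with hJ
  have key : ∀ y : K, y ∈ closure J := by
    intro y
    apply wf.induction (C := fun y => y ∈ closure J) y
    intro x IH
    by_cases hx : x ∈ J
    · exact subset_closure hx
    · have hx' : x ∈ closure {z | r z x} := by simpa [hJ] using hx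
      have hsub : {z | r z x} ⊆ closure J := fun z hz => IH z hz
      exact closure_minimal hsub isClosed_closure hx'
  have hJdense : Dense J := key
  have hlamJ : lam ≤ #J := hlam.trans (densCard_le_of_dense hJdense)
  obtain ⟨p, hp⟩ : ∃ p : Set ↥J, #p = lam := Cardinal.le_mk_iff_exists_set.1 hlamJ
  set x : ↥p → K := fun i => ((i : ↥J) : K) with hxdef
  have hxinj : Function.Injective x := fun i j h =>
    Subtype.ext (Subtype.ext h)
  set W : K → Set K := fun y => (closure {z | r z y})ᶜ with hW
  have hWopen : ∀ y, IsOpen (W y) := fun y => isClosed_closure.isOpen_compl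
  have hxW : ∀ i : ↥p, x i ∈ W (x i) := fun i => (i : ↥J).2
  have hsep : ∀ i j : ↥p, r (x i) (x j) → x i ∉ W (x j) := by
    intro i j hij hmem
    exact hmem (subset_closure hij)
  -- Urysohn functions
  have H : ∀ i : ↥p, ∃ f : C(K, ℝ), f (x i) = 1 ∧
      (∀ y, y ∉ W (x i) → f y = -1) ∧ ∀ y, ‖f y‖ ≤ 1 := by
    intro i
    obtain ⟨g, hg0, hg1, hg01⟩ := exists_continuous_zero_one_of_isClosed
      (isClosed_compl_iff.2 (hWopen (x i))) (isClosed_singleton (x := x i))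
      (disjoint_left.2 fun y hy (hy' : y ∈ ({x i} : Set K)) => hy (hy' ▸ hxW i))
    refine ⟨(2 : ℝ) • g - ContinuousMap.const K 1, ?_, ?_, ?_⟩
    · have hg : g (x i) = 1 := hg1 rfl
      simp only [ContinuousMap.sub_apply, ContinuousMap.smul_apply,
        ContinuousMap.const_apply, smul_eq_mul, hg]
      norm_num
    · intro y hy
      have hg : g y = 0 := hg0 hy
      simp only [ContinuousMap.sub_apply, ContinuousMap.smul_apply,
        ContinuousMap.const_apply, smul_eq_mul, hg]
      norm_num
    · intro y
      have := hg01 y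
      simp only [ContinuousMap.sub_apply, ContinuousMap.smul_apply,
        ContinuousMap.const_apply, smul_eq_mul, Real.norm_eq_abs]
      rw [abs_le]
      constructor <;> nlinarith [this.1, this.2]
  choose f hf1 hf2 hf3 using H
  have hnorm1 : ∀ i, ‖f i‖ ≤ 1 := fun i =>
    (ContinuousMap.norm_le _ zero_le_one).2 (hf3 i)
  have h2 : ∀ i j : ↥p, r (x i) (x j) → ‖f i - f j‖ = 2 := by
    intro i j hij
    have hle : ‖f i - f j‖ ≤ 2 := by
      refine (ContinuousMap.norm_le _ (by norm_num)).2 fun y => ?_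
      have h1 := hf3 i y
      have h2 := hf3 j y
      calc ‖(f i - f j) y‖ = ‖f i y - f j y‖ := by rw [ContinuousMap.sub_apply]
        _ ≤ ‖f i y‖ + ‖f j y‖ := norm_sub_le _ _
        _ ≤ 2 := by linarith
    have hge : (2 : ℝ) ≤ ‖f i - f j‖ := by
      have hval : (f i - f j) (x i) = 2 := by
        rw [ContinuousMap.sub_apply, hf1 i, hf2 j (x i) (hsep i j hij)]
        norm_num
      have h2' := ContinuousMap.norm_coe_le_norm (f i - f j) (x i)
      rw [hval] at h2'
      simpa using h2'
    linarith
  have hdist : ∀ i j : ↥p, i ≠ j → ‖f i - f j‖ = 2 := by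
    intro i j hij
    have hxne : x i ≠ x j := fun h => hij (hxinj h)
    rcases trichotomous_of r (x i) (x j) with h | h | h
    · exact h2 i j h
    · exact absurd h hxne
    · rw [norm_sub_rev]; exact h2 j i h
  have finj : Function.Injective f := by
    intro i j h
    by_contra hne
    have := hdist i j hne
    rw [h, sub_self] at this
    simp at this
  refine ⟨Set.range f, ?_, ?_, ?_⟩
  · rintro _ ⟨i, rfl⟩
    rw [Metric.mem_closedBall, dist_zero_right]
    exact hnorm1 i
  · rw [Cardinal.mk_range_eq f finj]
    exact hp
  · rintro _ ⟨i, rfl⟩ _ ⟨j, rfl⟩ hne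
    exact hdist i j (fun h => hne (h ▸ rfl))

/-- For a compact Hausdorff (indeed regular) space, the weight is at most
`2` to the density character. -/
lemma weight_le_two_pow_densCard :
    weight K ≤ max ((2 : Cardinal.{u}) ^ densCard K) ℵ₀ := by
  classical
  obtain ⟨D, hD, hDc⟩ := exists_dense_densCard (K := K)
  set ι : Set ↥D → Set K := fun s => interior (closure (((↑) : ↥D → K) '' s)) with hι
  have hbasis : IsTopologicalBasis (Set.range ι) := by
    refine isTopologicalBasis_of_isOpen_of_nhds ?_ ?_
    · rintro _ ⟨s, rfl⟩
      exact isOpen_interior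
    · intro a U haU hU
      obtain ⟨V, hVopen, haV, hVU⟩ := normal_exists_closure_subset
        (isClosed_singleton (x := a)) hU (singleton_subset_iff.2 haU)
      refine ⟨ι (((↑) : ↥D → K) ⁻¹' V), ⟨_, rfl⟩, ?_, ?_⟩
      · have himg : ((↑) : ↥D → K) '' (((↑) : ↥D → K) ⁻¹' V) = D ∩ V :=
          Subtype.image_preimage_coe D V
        have hsub : V ⊆ closure (D ∩ V) := by
          have := hD.open_subset_closure_inter hVopen
          rwa [inter_comm] at this
        have hint : V ⊆ interior (closure (D ∩ V)) := interior_maximal hsub hVopen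
        show a ∈ interior (closure (((↑) : ↥D → K) '' (((↑) : ↥D → K) ⁻¹' V)))
        rw [himg]
        exact hint (singleton_subset_iff.1 haV)
      · show interior (closure (((↑) : ↥D → K) '' (((↑) : ↥D → K) ⁻¹' V))) ⊆ U
        rw [Subtype.image_preimage_coe]
        refine interior_subset.trans ?_
        exact (closure_mono inter_subset_right).trans hVU
  have hle : weight K ≤ max #(Set.range ι) ℵ₀ :=
    ciInf_le (OrderBot.bddBelow _) (⟨Set.range ι, hbasis⟩ :
      {B : Set (Set K) // IsTopologicalBasis B})
  refine hle.trans (max_le_max ?_ le_rfl)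
  calc #(Set.range ι) ≤ #(Set ↥D) := Cardinal.mk_range_le
    _ = 2 ^ #↥D := Cardinal.mk_set
    _ = 2 ^ densCard K := by rw [hDc]

end Aux

/-- Under GCH: if `w(K)` is a limit cardinal then the closed unit ball of `C(K)` contains a
`2`-equilateral set of cardinality `w(K)`, and if `w(K) = κ⁺` for an infinite cardinal
`κ` then it contains a `2`-equilateral set of cardinality `κ`. -/
theorem statement19 (gch : ∀ lam : Cardinal.{u}, ℵ₀ ≤ lam → 2 ^ lam = Order.succ lam)
    (K : Type u) [TopologicalSpace K] [CompactSpace K] [T2Space K] [Infinite K] :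
    ((∀ μ : Cardinal.{u}, weight K ≠ Order.succ μ) →
      ∃ A : Set C(K, ℝ), A ⊆ Metric.closedBall 0 1 ∧ #A = weight K ∧
        ∀ f ∈ A, ∀ g ∈ A, f ≠ g → ‖f - g‖ = 2) ∧
    (∀ κ : Cardinal.{u}, ℵ₀ ≤ κ → weight K = Order.succ κ →
      ∃ A : Set C(K, ℝ), A ⊆ Metric.closedBall 0 1 ∧ #A = κ ∧
        ∀ f ∈ A, ∀ g ∈ A, f ≠ g → ‖f - g‖ = 2) := by
  set d : Cardinal.{u} := densCard K with hdd
  have hdinf : ℵ₀ ≤ d := aleph0_le_densCard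
  have h2d : (2 : Cardinal.{u}) ^ d = Order.succ d := gch d hdinf
  have hw : weight K ≤ Order.succ d := by
    have h := weight_le_two_pow_densCard (K := K)
    rw [← hdd, h2d] at h
    rwa [max_eq_left (hdinf.trans (Order.le_succ d))] at h
  constructor
  · intro hlim
    have hwd : weight K ≤ d :=
      Order.lt_succ_iff.1 (hw.lt_of_ne (hlim d))
    exact equilateral_of_le_densCard (weight K) hwd
  · intro κ hκ hwκ
    have hκd : κ ≤ d := by
      rw [hwκ] at hw
      exact Order.succ_le_succ_iff.1 hw
    exact equilateral_of_le_densCard κ hκd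
end
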